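/- arXiv:math/0703051 — 14 statements merged into one kernel-verified Lean document; each statement's English description precedes it below -/
import Mathlib

section
/- Let p be a prime number and r a positive even integer, and let R = Z/p^r. Then χ(Γ₀(R)) = ω(Γ₀(R)) = p^{r/2}. -/
/-- Beck's zero-divisor graph `Γ₀(R)`: vertices are all elements of `R`, and two
distinct vertices `x`, `y` are adjacent iff `x * y = 0`. -/
def gammaZero (R : Type*) [CommRing R] : SimpleGraph R where
  Adj x y := x ≠ y ∧ x * y = 0
  symm := ⟨fun x y ⟨h1, h2⟩ => ⟨h1.symm, by rwa [mul_comm]⟩⟩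
  loopless := ⟨fun x ⟨h1, _⟩ => h1 rfl⟩

/-- The clique number of a graph, as an extended natural number: the least upper
bound of the sizes of (finite) cliques in `G`. -/
noncomputable def cliqueNumE {V : Type*} (G : SimpleGraph V) : ℕ∞ :=
  ⨆ (s : Finset V) (_ : G.IsClique (s : Set V)), (s.card : ℕ∞)

theorem stmt0 (p r : ℕ) (hp : p.Prime) (hr : 0 < r) (hre : Even r) :
    (gammaZero (ZMod (p ^ r))).chromaticNumber = cliqueNumE (gammaZero (ZMod (p ^ r))) ∧
    cliqueNumE (gammaZero (ZMod (p ^ r))) = ((p ^ (r / 2) : ℕ) : ℕ∞) := by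
  obtain ⟨k, hk⟩ := hre
  subst hk
  have hk0 : 0 < k := by omega
  have hdiv : (k + k) / 2 = k := by omega
  rw [hdiv]
  haveI : NeZero (p ^ (k + k)) := ⟨pow_ne_zero _ hp.pos.ne'⟩
  have hpk : 0 < p ^ k := pow_pos hp.pos _
  have hpk1 : 1 < p ^ k := Nat.one_lt_pow hk0.ne' hp.one_lt
  have hNN : p ^ (k + k) = p ^ k * p ^ k := pow_add p k k
  have hNpos : 0 < p ^ (k + k) := Nat.pos_of_ne_zero (NeZero.ne (p ^ (k + k)))
  have G := gammaZero (ZMod (p ^ (k + k)))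
  -- key: if x*y = 0 in ZMod (p ^ (k + k)), then p ^ (k + k) ∣ x.val * y.val
  have hmul : ∀ x y : ZMod (p ^ (k + k)), x * y = 0 → p ^ (k + k) ∣ x.val * y.val := by
    intro x y h
    have : ((x.val * y.val : ℕ) : ZMod (p ^ (k + k))) = 0 := by
      push_cast [ZMod.natCast_val, ZMod.cast_id]
      exact h
    exact (ZMod.natCast_eq_zero_iff _ _).mp this
  -- key2: if x*y=0 then p^k ∣ x.val or p^k ∣ y.val
  have hkey : ∀ x y : ZMod (p ^ (k + k)), x * y = 0 → p ^ k ∣ x.val ∨ p ^ k ∣ y.val := by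
    intro x y h
    by_contra hc
    push_neg at hc
    obtain ⟨hx, hy⟩ := hc
    have hx0 : x.val ≠ 0 := fun h0 => hx (h0 ▸ dvd_zero _)
    have hy0 : y.val ≠ 0 := fun h0 => hy (h0 ▸ dvd_zero _)
    have hd := hmul x y h
    have h1 : k + k ≤ (x.val * y.val).factorization p :=
      (Nat.Prime.pow_dvd_iff_le_factorization hp (Nat.mul_ne_zero hx0 hy0)).mp hd
    rw [Nat.factorization_mul hx0 hy0] at h1
    have h2 : ¬ k ≤ x.val.factorization p := fun hle =>
      hx ((Nat.Prime.pow_dvd_iff_le_factorization hp hx0).mpr hle)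
    have h3 : ¬ k ≤ y.val.factorization p := fun hle =>
      hy ((Nat.Prime.pow_dvd_iff_le_factorization hp hy0).mpr hle)
    simp only [Finsupp.add_apply] at h1
    omega
  -- Coloring with Fin (p^k)
  have hcol : (gammaZero (ZMod (p ^ (k + k)))).Colorable (p ^ k) := by
    refine ⟨⟨fun x => if h : p ^ k ∣ x.val then ⟨x.val / p ^ k, ?_⟩ else ⟨1, hpk1⟩, ?_⟩⟩
    · exact Nat.div_lt_of_lt_mul (lt_of_lt_of_eq x.val_lt hNN)
    · rintro x y ⟨hxy, hz⟩ hcc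
      by_cases hx : p ^ k ∣ x.val <;> by_cases hy : p ^ k ∣ y.val <;>
        simp only [hx, hy, dif_pos, dif_neg, not_false_iff, Fin.mk.injEq] at hcc
      · apply hxy
        apply ZMod.val_injective
        obtain ⟨a, ha⟩ := hx; obtain ⟨b, hb⟩ := hy
        rw [ha, hb] at hcc ⊢
        rw [Nat.mul_div_cancel_left _ hpk, Nat.mul_div_cancel_left _ hpk] at hcc
        rw [hcc]
      · -- x ideal, y not; color x = 1 means x.val = p^k
        have hxval : x.val = p ^ k := by
          obtain ⟨a, ha⟩ := hx
          rw [ha, Nat.mul_div_cancel_left _ hpk] at hcc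
          rw [ha, hcc, mul_one]
        have := hmul x y hz
        rw [hxval] at this
        have h2 : p ^ k * p ^ k ∣ p ^ k * y.val := by rw [← hNN]; exact this
        exact hy ((mul_dvd_mul_iff_left hpk.ne').mp h2)
      · have hyval : y.val = p ^ k := by
          obtain ⟨a, ha⟩ := hy
          rw [ha, Nat.mul_div_cancel_left _ hpk] at hcc
          rw [ha, ← hcc, mul_one]
        have := hmul x y hz
        rw [hyval, mul_comm x.val] at this
        have h2 : p ^ k * p ^ k ∣ p ^ k * x.val := by rw [← hNN]; exact this
        exact hx ((mul_dvd_mul_iff_left hpk.ne').mp h2)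
      · rcases hkey x y hz with h | h
        · exact hx h
        · exact hy h
  -- the clique
  set s : Finset (ZMod (p ^ (k + k))) := (Finset.range (p ^ k)).image
    (fun m => ((m * p ^ k : ℕ) : ZMod (p ^ (k + k)))) with hs
  have hinj : Set.InjOn (fun m => ((m * p ^ k : ℕ) : ZMod (p ^ (k + k)))) (Finset.range (p ^ k)) := by
    intro a ha b hb hab
    simp only [Finset.coe_range, Set.mem_Iio] at ha hb
    have hlta : a * p ^ k < p ^ (k + k) := by calc a * p ^ k < p ^ k * p ^ k := (Nat.mul_lt_mul_right hpk).mpr ha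
        _ = p ^ (k + k) := hNN.symm
    have hltb : b * p ^ k < p ^ (k + k) := by calc b * p ^ k < p ^ k * p ^ k := (Nat.mul_lt_mul_right hpk).mpr hb
        _ = p ^ (k + k) := hNN.symm
    simp only [] at hab
    have := congrArg ZMod.val hab
    simp only [ZMod.val_cast_of_lt hlta, ZMod.val_cast_of_lt hltb] at this
    exact Nat.eq_of_mul_eq_mul_right hpk this
  have hscard : s.card = p ^ k := by
    rw [hs, Finset.card_image_of_injOn hinj, Finset.card_range]
  have hclique : (gammaZero (ZMod (p ^ (k + k)))).IsClique (s : Set (ZMod (p ^ (k + k)))) := by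
    intro x hx y hy hxy
    refine ⟨hxy, ?_⟩
    simp only [hs, Finset.coe_image, Set.mem_image, Finset.coe_range, Set.mem_Iio] at hx hy
    obtain ⟨a, _, rfl⟩ := hx
    obtain ⟨b, _, rfl⟩ := hy
    have : ((a * p ^ k) * (b * p ^ k) : ℕ) = (a * b) * p ^ (k + k) := by rw [hNN] ; ring
    rw [← Nat.cast_mul, this, Nat.cast_mul, ZMod.natCast_self, mul_zero]
  -- combine
  have hle1 : ((p ^ k : ℕ) : ℕ∞) ≤ cliqueNumE (gammaZero (ZMod (p ^ (k + k)))) := by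
    rw [← hscard]
    exact le_iSup₂_of_le s hclique le_rfl
  have hle2 : cliqueNumE (gammaZero (ZMod (p ^ (k + k)))) ≤ (gammaZero (ZMod (p ^ (k + k)))).chromaticNumber := by
    refine iSup₂_le fun t ht => ?_
    exact_mod_cast SimpleGraph.IsClique.card_le_chromaticNumber ht
  have hle3 : (gammaZero (ZMod (p ^ (k + k)))).chromaticNumber ≤ ((p ^ k : ℕ) : ℕ∞) :=
    hcol.chromaticNumber_le
  constructor
  · exact le_antisymm (hle3.trans hle1) hle2
  · exact le_antisymm (hle2.trans hle3) hle1
end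

section
/- Let p be a prime number and r a positive odd integer, and let R = Z/p^r. Then χ(Γ₀(R)) = ω(Γ₀(R)) = p^{(r-1)/2} + 1. -/
section Aux

variable {p k : ℕ} (hp : p.Prime)

local notation "N" => p ^ (2 * k + 1)

lemma npos (hp : p.Prime) : 0 < (N : ℕ) := pow_pos hp.pos _

/-- Key lemma: if `x * y = 0` in `ZMod (p^(2k+1))` then `p^(k+1)` divides the value of
`x` or of `y`. -/
lemma keyDvd (hp : p.Prime) (x y : ZMod N) (h : x * y = 0) :
    p ^ (k + 1) ∣ x.val ∨ p ^ (k + 1) ∣ y.val := by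
  haveI : NeZero (N : ℕ) := ⟨(npos hp).ne'⟩
  by_contra hc
  push_neg at hc
  obtain ⟨hx, hy⟩ := hc
  have hx0 : x.val ≠ 0 := by rintro h0; exact hx (h0 ▸ dvd_zero _)
  have hy0 : y.val ≠ 0 := by rintro h0; exact hy (h0 ▸ dvd_zero _)
  have hdvd : (N : ℕ) ∣ x.val * y.val := by
    have := ZMod.val_mul x y
    rw [h, ZMod.val_zero] at this
    exact Nat.dvd_of_mod_eq_zero this.symm
  have h1 : 2 * k + 1 ≤ (x.val * y.val).factorization p :=
    (Nat.Prime.pow_dvd_iff_le_factorization hp (mul_ne_zero hx0 hy0)).mp hdvd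
  have h2 : ¬ (k + 1 ≤ x.val.factorization p) := fun hle =>
    hx ((Nat.Prime.pow_dvd_iff_le_factorization hp hx0).mpr hle)
  have h3 : ¬ (k + 1 ≤ y.val.factorization p) := fun hle =>
    hy ((Nat.Prime.pow_dvd_iff_le_factorization hp hy0).mpr hle)
  rw [Nat.factorization_mul hx0 hy0, Finsupp.add_apply] at h1
  omega

/-- If `p^(k+1) ∣ x.val` and `p^k ∣ y.val` then `x * y = 0`. -/
lemma mulZero (hp : p.Prime) (x y : ZMod N) (hx : p ^ (k + 1) ∣ x.val)
    (hy : p ^ k ∣ y.val) : x * y = 0 := by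
  haveI : NeZero (N : ℕ) := ⟨(npos hp).ne'⟩
  obtain ⟨a, ha⟩ := hx
  obtain ⟨b, hb⟩ := hy
  have hxx : ((x.val : ℕ) : ZMod N) = x := ZMod.natCast_zmod_val x
  have hyy : ((y.val : ℕ) : ZMod N) = y := ZMod.natCast_zmod_val y
  rw [← hxx, ← hyy, ← Nat.cast_mul, ha, hb]
  have : p ^ (k + 1) * a * (p ^ k * b) = N * (a * b) := by ring
  rw [this, Nat.cast_mul, ZMod.natCast_self, zero_mul]

end Aux

theorem stmt1 (p r : ℕ) (hp : p.Prime) (hr : 0 < r) (hro : Odd r) :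
    (gammaZero (ZMod (p ^ r))).chromaticNumber = cliqueNumE (gammaZero (ZMod (p ^ r))) ∧
    cliqueNumE (gammaZero (ZMod (p ^ r))) = ((p ^ ((r - 1) / 2) + 1 : ℕ) : ℕ∞) := by
  classical
  obtain ⟨k, rfl⟩ := hro
  have hq : (2 * k + 1 - 1) / 2 = k := by omega
  rw [hq]
  haveI : NeZero (p ^ (2 * k + 1)) := ⟨(npos hp).ne'⟩
  have hplt : 1 < p := hp.one_lt
  have hNlt : p ^ (k + 1) * p ^ k = p ^ (2 * k + 1) := by rw [← pow_add]; congr 1; omega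
  have hdivlt : ∀ x : ZMod (p ^ (2 * k + 1)), x.val / p ^ (k + 1) < p ^ k := by
    intro x
    rw [Nat.div_lt_iff_lt_mul (pow_pos hp.pos _)]
    calc x.val < p ^ (2 * k + 1) := x.val_lt
    _ = p ^ k * p ^ (k + 1) := by rw [← hNlt]; ring
  -- the coloring
  set C : ZMod (p ^ (2 * k + 1)) → Fin (p ^ k + 1) := fun x =>
    if p ^ (k + 1) ∣ x.val then ⟨x.val / p ^ (k + 1), lt_of_lt_of_le (hdivlt x) (Nat.le_succ _)⟩
    else ⟨p ^ k, Nat.lt_succ_self _⟩ with hC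
  have colorable : (gammaZero (ZMod (p ^ (2 * k + 1)))).Colorable (p ^ k + 1) := by
    refine ⟨SimpleGraph.Coloring.mk C ?_⟩
    rintro x y ⟨hxy, hmul⟩ hCeq
    by_cases hdx : p ^ (k + 1) ∣ x.val <;> by_cases hdy : p ^ (k + 1) ∣ y.val
    · simp only [hC, if_pos hdx, if_pos hdy, Fin.mk.injEq] at hCeq
      apply hxy
      apply ZMod.val_injective
      have h1 := Nat.div_mul_cancel hdx
      have h2 := Nat.div_mul_cancel hdy
      rw [← h1, ← h2, hCeq]
    · simp only [hC, if_pos hdx, if_neg hdy, Fin.mk.injEq] at hCeq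
      exact absurd hCeq (Nat.ne_of_lt (hdivlt x))
    · simp only [hC, if_neg hdx, if_pos hdy, Fin.mk.injEq] at hCeq
      exact absurd hCeq.symm (Nat.ne_of_lt (hdivlt y))
    · rcases keyDvd hp x y hmul with h | h <;> [exact hdx h; exact hdy h]
  -- the big clique
  set f : Fin (p ^ k) → ZMod (p ^ (2 * k + 1)) :=
    fun i => ((p ^ (k + 1) * (i : ℕ) : ℕ) : ZMod (p ^ (2 * k + 1))) with hf
  have hflt : ∀ i : Fin (p ^ k), p ^ (k + 1) * (i : ℕ) < p ^ (2 * k + 1) := by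
    intro i
    calc p ^ (k + 1) * (i : ℕ) < p ^ (k + 1) * p ^ k :=
      mul_lt_mul_of_pos_left i.isLt (pow_pos hp.pos _)
    _ = p ^ (2 * k + 1) := hNlt
  have hfval : ∀ i : Fin (p ^ k), (f i).val = p ^ (k + 1) * (i : ℕ) := fun i =>
    ZMod.val_natCast_of_lt (hflt i)
  have finj : Function.Injective f := by
    intro i j hij
    have := congrArg ZMod.val hij
    rw [hfval, hfval] at this
    exact Fin.ext (Nat.eq_of_mul_eq_mul_left (pow_pos hp.pos _) this)
  have hpklt : p ^ k < p ^ (2 * k + 1) := Nat.pow_lt_pow_right hplt (by omega)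
  have hvalpk : ((p ^ k : ℕ) : ZMod (p ^ (2 * k + 1))).val = p ^ k :=
    ZMod.val_natCast_of_lt hpklt
  set S : Finset (ZMod (p ^ (2 * k + 1))) :=
    insert ((p ^ k : ℕ) : ZMod (p ^ (2 * k + 1))) (Finset.image f Finset.univ) with hS
  have hmemval : ∀ x ∈ Finset.image f Finset.univ, p ^ (k + 1) ∣ x.val := by
    intro x hx
    obtain ⟨i, _, rfl⟩ := Finset.mem_image.mp hx
    rw [hfval]
    exact dvd_mul_right _ _
  have hpk_not : ((p ^ k : ℕ) : ZMod (p ^ (2 * k + 1))) ∉ Finset.image f Finset.univ := by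
    intro hmem
    have hdvd : p ^ (k + 1) ∣ p ^ k := hvalpk ▸ hmemval _ hmem
    have h1 : p ^ (k + 1) ≤ p ^ k := Nat.le_of_dvd (pow_pos hp.pos _) hdvd
    have h2 : p ^ k < p ^ (k + 1) := Nat.pow_lt_pow_right hplt (Nat.lt_succ_self _)
    omega
  have hSval : ∀ x ∈ S, p ^ k ∣ x.val := by
    intro x hx
    rcases Finset.mem_insert.mp hx with rfl | hx'
    · rw [hvalpk]
    · exact dvd_trans (pow_dvd_pow p (Nat.le_succ k)) (hmemval x hx')
  have hSclique : (gammaZero (ZMod (p ^ (2 * k + 1)))).IsClique (S : Set _) := by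
    intro x hx y hy hne
    refine ⟨hne, ?_⟩
    rcases Finset.mem_insert.mp hx with rfl | hx'
    · rcases Finset.mem_insert.mp hy with rfl | hy'
      · exact absurd rfl hne
      · rw [mul_comm (((p ^ k : ℕ)) : ZMod (p ^ (2 * k + 1))) y]
        exact mulZero hp y _ (hmemval y hy') (hSval _ (Finset.mem_insert_self _ _))
    · exact mulZero hp x y (hmemval x hx') (hSval y hy)
  have hScard : S.card = p ^ k + 1 := by
    rw [hS, Finset.card_insert_of_notMem hpk_not,
      Finset.card_image_of_injective _ finj, Finset.card_univ, Fintype.card_fin]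
  -- upper bound on clique sizes
  have hbound : ∀ s : Finset (ZMod (p ^ (2 * k + 1))),
      (gammaZero (ZMod (p ^ (2 * k + 1)))).IsClique (s : Set _) → s.card ≤ p ^ k + 1 := by
    intro s hs
    set M : Finset (ZMod (p ^ (2 * k + 1))) :=
      Finset.univ.filter (fun x => p ^ (k + 1) ∣ x.val) with hM
    have hMcard : M.card ≤ p ^ k := by
      refine Finset.card_le_card_of_injOn (fun x => x.val / p ^ (k + 1)) ?_ ?_
        |>.trans_eq (Finset.card_range _)
      · intro a _
        exact Finset.mem_range.mpr (hdivlt a)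
      · intro a ha b hb hab
        simp only [hM, Finset.coe_filter, Set.mem_setOf_eq] at ha hb
        apply ZMod.val_injective
        have h1 := Nat.div_mul_cancel ha.2
        have h2 := Nat.div_mul_cancel hb.2
        simp only at hab
        rw [← h1, ← h2, hab]
    have hsd : (s \ M).card ≤ 1 := by
      refine Finset.card_le_one.mpr fun a ha b hb => ?_
      by_contra hne
      obtain ⟨-, hab⟩ := hs (Finset.mem_coe.mpr (Finset.mem_sdiff.mp ha).1)
        (Finset.mem_coe.mpr (Finset.mem_sdiff.mp hb).1) hne
      rcases keyDvd hp a b hab with h | h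
      · exact (Finset.mem_sdiff.mp ha).2 (Finset.mem_filter.mpr ⟨Finset.mem_univ _, h⟩)
      · exact (Finset.mem_sdiff.mp hb).2 (Finset.mem_filter.mpr ⟨Finset.mem_univ _, h⟩)
    calc s.card = (s ∩ M).card + (s \ M).card := (Finset.card_inter_add_card_sdiff s M).symm
    _ ≤ M.card + 1 := Nat.add_le_add (Finset.card_le_card (Finset.inter_subset_right)) hsd
    _ ≤ p ^ k + 1 := Nat.add_le_add_right hMcard 1
  have hω : cliqueNumE (gammaZero (ZMod (p ^ (2 * k + 1)))) = ((p ^ k + 1 : ℕ) : ℕ∞) := by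
    apply le_antisymm
    · exact iSup_le fun s => iSup_le fun hs => Nat.cast_le.mpr (hbound s hs)
    · calc ((p ^ k + 1 : ℕ) : ℕ∞) = (S.card : ℕ∞) := by rw [hScard]
      _ ≤ _ := le_iSup₂ (f := fun (s : Finset (ZMod (p ^ (2 * k + 1))))
          (_ : (gammaZero (ZMod (p ^ (2 * k + 1)))).IsClique (s : Set _)) => (s.card : ℕ∞))
          S hSclique
  refine ⟨?_, hω⟩
  rw [hω]
  apply le_antisymm
  · exact colorable.chromaticNumber_le
  · calc ((p ^ k + 1 : ℕ) : ℕ∞) = (S.card : ℕ∞) := by rw [hScard]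
    _ ≤ _ := hSclique.card_le_chromaticNumber
end

section
/- Let p be a prime number, r a positive odd integer, and R = Z/p^r. If S is a clique of Γ₀(R) of maximum size (i.e., |S| = ω(Γ₀(R))), then S contains exactly one element a with a² ≠ 0. -/
theorem stmt3 (p r : ℕ) (hp : p.Prime) (hr : 0 < r) (hro : Odd r)
    (S : Finset (ZMod (p ^ r)))
    (hS : (gammaZero (ZMod (p ^ r))).IsClique (S : Set (ZMod (p ^ r))))
    (hmax : (S.card : ℕ∞) = cliqueNumE (gammaZero (ZMod (p ^ r)))) :
    ∃! a, a ∈ S ∧ a ^ 2 ≠ 0 := by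
  classical
  obtain ⟨m, hm⟩ := hro
  haveI : NeZero (p ^ r) := ⟨pow_ne_zero r hp.pos.ne'⟩
  have hp1 : 1 < p := hp.one_lt
  -- dvd lemma
  have dvdsq : ∀ n : ℕ, p ^ r ∣ n ^ 2 ↔ p ^ (m + 1) ∣ n := by
    intro n
    rcases eq_or_ne n 0 with rfl | hn
    · simp
    · rw [hp.pow_dvd_iff_le_factorization (pow_ne_zero 2 hn),
        hp.pow_dvd_iff_le_factorization hn, Nat.factorization_pow, Finsupp.smul_apply,
        smul_eq_mul]
      omega
  -- key characterization
  have key : ∀ x : ZMod (p ^ r), x ^ 2 = 0 ↔ p ^ (m + 1) ∣ x.val := by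
    intro x
    have hx : ((x.val : ℕ) : ZMod (p ^ r)) = x := by rw [ZMod.natCast_val, ZMod.cast_id]
    have h2 : x ^ 2 = ((x.val ^ 2 : ℕ) : ZMod (p ^ r)) := by rw [Nat.cast_pow, hx]
    rw [h2, ZMod.natCast_eq_zero_iff, dvdsq]
  -- helper to kill casts
  have hzero : ∀ n : ℕ, p ^ r ∣ n → ((n : ℕ) : ZMod (p ^ r)) = 0 := fun n h =>
    (ZMod.natCast_eq_zero_iff n (p ^ r)).mpr h
  -- the big clique T
  set q : ℕ := p ^ (m + 1) with hq
  have hqr : p ^ r = q * p ^ m := by rw [hq, ← pow_add]; congr 1; omega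
  have hmr : p ^ m < p ^ r := Nat.pow_lt_pow_right hp1 (by omega)
  have hvals : ∀ k < p ^ m, ((k * q : ℕ) : ZMod (p ^ r)).val = k * q := by
    intro k hk
    apply ZMod.val_cast_of_lt
    calc k * q < p ^ m * q := by
          exact Nat.mul_lt_mul_of_pos_right hk (by positivity)
      _ = p ^ r := by rw [hqr, mul_comm]
  have hpmval : ((p ^ m : ℕ) : ZMod (p ^ r)).val = p ^ m := ZMod.val_cast_of_lt hmr
  set T : Finset (ZMod (p ^ r)) :=
    ((Finset.range (p ^ m)).image (fun k => ((k * q : ℕ) : ZMod (p ^ r)))) ∪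
      {((p ^ m : ℕ) : ZMod (p ^ r))} with hT
  have hpm_notmem : ((p ^ m : ℕ) : ZMod (p ^ r)) ∉
      (Finset.range (p ^ m)).image (fun k => ((k * q : ℕ) : ZMod (p ^ r))) := by
    simp only [Finset.mem_image, Finset.mem_range, not_exists, not_and]
    intro k hk hkeq
    have := congrArg ZMod.val hkeq
    rw [hvals k hk, hpmval] at this
    have hdvd : q ∣ p ^ m := ⟨k, by rw [← this, mul_comm]⟩
    have h1 := Nat.le_of_dvd (by positivity) hdvd
    have h2 : p ^ m < q := Nat.pow_lt_pow_right hp1 (by omega)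
    omega
  have hTcard : T.card = p ^ m + 1 := by
    rw [hT, Finset.card_union_of_disjoint (by simpa using hpm_notmem),
      Finset.card_image_of_injOn, Finset.card_range, Finset.card_singleton]
    intro a ha b hb hab
    simp only [Finset.coe_range, Set.mem_Iio] at ha hb
    have := congrArg ZMod.val hab
    rw [hvals a ha, hvals b hb] at this
    have hq0 : 0 < q := by positivity
    exact Nat.eq_of_mul_eq_mul_right hq0 this
  have hTclique : (gammaZero (ZMod (p ^ r))).IsClique (T : Set (ZMod (p ^ r))) := by
    intro x hx y hy hxy
    refine ⟨hxy, ?_⟩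
    simp only [hT, Finset.coe_union, Finset.coe_image, Finset.coe_range, Set.mem_union,
      Set.mem_image, Set.mem_Iio, Finset.coe_singleton, Set.mem_singleton_iff] at hx hy
    have hdvd1 : p ^ r ∣ q * q := by rw [hq, ← pow_add]; exact pow_dvd_pow p (by omega)
    have hdvd2 : p ^ r ∣ p ^ m * q := by rw [hq, ← pow_add]; exact pow_dvd_pow p (by omega)
    rcases hx with ⟨k, _, rfl⟩ | rfl <;> rcases hy with ⟨l, _, rfl⟩ | rfl
    · rw [← Nat.cast_mul]; apply hzero
      calc p ^ r ∣ q * q := hdvd1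
        _ ∣ k * q * (l * q) := ⟨k * l, by ring⟩
    · rw [← Nat.cast_mul]; apply hzero
      calc p ^ r ∣ p ^ m * q := hdvd2
        _ ∣ k * q * p ^ m := ⟨k, by ring⟩
    · rw [← Nat.cast_mul]; apply hzero
      calc p ^ r ∣ p ^ m * q := hdvd2
        _ ∣ p ^ m * (l * q) := ⟨l, by ring⟩
    · exact absurd rfl hxy
  -- lower bound on clique number
  have hlow : ((p ^ m + 1 : ℕ) : ℕ∞) ≤ cliqueNumE (gammaZero (ZMod (p ^ r))) := by
    rw [← hTcard]
    exact le_iSup₂ (f := fun (s : Finset (ZMod (p ^ r)))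
      (_ : (gammaZero (ZMod (p ^ r))).IsClique (s : Set (ZMod (p ^ r)))) => (s.card : ℕ∞))
      T hTclique
  have hScard : p ^ m + 1 ≤ S.card := by
    rw [← hmax] at hlow
    exact_mod_cast hlow
  -- at most one non-square-zero element
  have hone : ∀ a ∈ S, ∀ b ∈ S, a ^ 2 ≠ 0 → b ^ 2 ≠ 0 → a = b := by
    intro a ha b hb ha2 hb2
    by_contra hab
    obtain ⟨-, hprod⟩ := hS ha hb hab
    have hav : ¬ p ^ (m + 1) ∣ a.val := fun h => ha2 ((key a).mpr h)
    have hbv : ¬ p ^ (m + 1) ∣ b.val := fun h => hb2 ((key b).mpr h)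
    have ha0 : a.val ≠ 0 := fun h => hav (h ▸ dvd_zero _)
    have hb0 : b.val ≠ 0 := fun h => hbv (h ▸ dvd_zero _)
    have hxa : ((a.val : ℕ) : ZMod (p ^ r)) = a := by rw [ZMod.natCast_val, ZMod.cast_id]
    have hxb : ((b.val : ℕ) : ZMod (p ^ r)) = b := by rw [ZMod.natCast_val, ZMod.cast_id]
    have : p ^ r ∣ a.val * b.val := by
      rw [← ZMod.natCast_eq_zero_iff, Nat.cast_mul, hxa, hxb]
      exact hprod
    rw [hp.pow_dvd_iff_le_factorization (Nat.mul_ne_zero ha0 hb0),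
      Nat.factorization_mul ha0 hb0, Finsupp.add_apply] at this
    have h1 : a.val.factorization p ≤ m := by
      by_contra h
      exact hav ((hp.pow_dvd_iff_le_factorization ha0).mpr (by omega))
    have h2 : b.val.factorization p ≤ m := by
      by_contra h
      exact hbv ((hp.pow_dvd_iff_le_factorization hb0).mpr (by omega))
    omega
  -- existence
  have hex : ∃ a ∈ S, a ^ 2 ≠ 0 := by
    by_contra h
    push_neg at h
    -- all elements square-zero: inject into range p^m
    have hmaps : ∀ x ∈ S, x.val / q ∈ Finset.range (p ^ m) := by
      intro x hx
      rw [Finset.mem_range]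
      have hv : x.val < p ^ r := ZMod.val_lt x
      exact Nat.div_lt_of_lt_mul (by rw [← hqr]; exact hv)
    have hinj : Set.InjOn (fun x : ZMod (p ^ r) => x.val / q) (S : Set (ZMod (p ^ r))) := by
      intro x hx y hy hxy
      have hdx : q ∣ x.val := (key x).mp (h x hx)
      have hdy : q ∣ y.val := (key y).mp (h y hy)
      apply ZMod.val_injective
      have := congrArg (· * q) hxy
      simpa [Nat.div_mul_cancel hdx, Nat.div_mul_cancel hdy] using this
    have hle : S.card ≤ p ^ m := by
      have := Finset.card_le_card_of_injOn (fun x : ZMod (p ^ r) => x.val / q) hmaps hinj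
      simpa using this
    omega
  obtain ⟨a, ha, ha2⟩ := hex
  exact ⟨a, ⟨ha, ha2⟩, fun b ⟨hb, hb2⟩ => hone b hb a ha hb2 ha2⟩
end

section
/- Let R₁ and R₂ be commutative rings with 1 and R = R₁ × R₂. Then χ(Γ₀(R)) ≥ χ(Γ₀(R₁)) + χ(Γ₀(R₂)) − 1. -/
theorem stmt5 (R₁ R₂ : Type*) [CommRing R₁] [CommRing R₂] :
    (gammaZero (R₁ × R₂)).chromaticNumber ≥
      (gammaZero R₁).chromaticNumber + (gammaZero R₂).chromaticNumber - 1 := by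
  classical
  rw [ge_iff_le, tsub_le_iff_right]
  by_cases htop : (gammaZero (R₁ × R₂)).chromaticNumber = ⊤
  · simp [htop]
  · obtain ⟨m, hm⟩ : ∃ m : ℕ, (gammaZero (R₁ × R₂)).chromaticNumber = m := by
      lift (gammaZero (R₁ × R₂)).chromaticNumber to ℕ using htop with m hm
      exact ⟨m, rfl⟩
    have hcol : (gammaZero (R₁ × R₂)).Colorable m := by
      rw [← SimpleGraph.chromaticNumber_le_iff_colorable, hm]
    obtain ⟨C⟩ := hcol
    set S₁ : Finset (Fin m) := Finset.univ.filter (fun c => ∃ x : R₁, C (x, 0) = c) with hS₁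
    set S₂ : Finset (Fin m) := Finset.univ.filter (fun c => ∃ y : R₂, C (0, y) = c) with hS₂
    -- coloring of gammaZero R₁ with colors in S₁
    have c₁ : (gammaZero R₁).Coloring S₁ := by
      refine SimpleGraph.Coloring.mk (fun x => ⟨C (x, 0), by simp [hS₁]⟩) ?_
      rintro x y ⟨hxy, hmul⟩
      have hadj : (gammaZero (R₁ × R₂)).Adj (x, 0) (y, 0) := by
        refine ⟨by simpa using hxy, ?_⟩
        simp [Prod.ext_iff, hmul]
      simpa [Subtype.ext_iff] using C.valid hadj
    have c₂ : (gammaZero R₂).Coloring S₂ := by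
      refine SimpleGraph.Coloring.mk (fun y => ⟨C (0, y), by simp [hS₂]⟩) ?_
      rintro x y ⟨hxy, hmul⟩
      have hadj : (gammaZero (R₁ × R₂)).Adj (0, x) (0, y) := by
        refine ⟨by simpa using hxy, ?_⟩
        simp [Prod.ext_iff, hmul]
      simpa [Subtype.ext_iff] using C.valid hadj
    have h1 : (gammaZero R₁).chromaticNumber ≤ (S₁.card : ℕ∞) := by
      have := c₁.colorable.chromaticNumber_le
      simpa [Fintype.card_coe] using this
    have h2 : (gammaZero R₂).chromaticNumber ≤ (S₂.card : ℕ∞) := by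
      have := c₂.colorable.chromaticNumber_le
      simpa [Fintype.card_coe] using this
    -- intersection is a subset of {C (0,0)}
    have hinter : S₁ ∩ S₂ ⊆ {C (0, 0)} := by
      intro c hc
      simp only [hS₁, hS₂, Finset.mem_inter, Finset.mem_filter, Finset.mem_univ, true_and] at hc
      obtain ⟨⟨x, hx⟩, ⟨y, hy⟩⟩ := hc
      by_cases hx0 : x = 0
      · simp [Finset.mem_singleton, ← hx, hx0]
      · exfalso
        have hadj : (gammaZero (R₁ × R₂)).Adj (x, 0) (0, y) := by
          refine ⟨?_, by simp⟩
          simp [Prod.ext_iff, hx0]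
        exact C.valid hadj (hx.trans hy.symm)
    have hcard : S₁.card + S₂.card ≤ m + 1 := by
      have h3 : (S₁ ∪ S₂).card ≤ m := by
        simpa using Finset.card_le_card (Finset.subset_univ (S₁ ∪ S₂))
      have h4 : (S₁ ∩ S₂).card ≤ 1 := by
        simpa using Finset.card_le_card hinter
      have := Finset.card_union_add_card_inter S₁ S₂
      omega
    calc (gammaZero R₁).chromaticNumber + (gammaZero R₂).chromaticNumber
        ≤ (S₁.card : ℕ∞) + S₂.card := add_le_add h1 h2
      _ = ((S₁.card + S₂.card : ℕ) : ℕ∞) := by push_cast; ring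
      _ ≤ ((m + 1 : ℕ) : ℕ∞) := by exact_mod_cast hcard
      _ = (gammaZero (R₁ × R₂)).chromaticNumber + 1 := by rw [hm]; push_cast; ring
end

section
/- Let R₁ and R₂ be commutative rings with 1 such that R₂ is reduced (has no nonzero nilpotent elements), and let R = R₁ × R₂. Then χ(Γ₀(R)) = χ(Γ₀(R₁)) + χ(Γ₀(R₂)) − 1. -/
open SimpleGraph in
lemma gamma_upper {R₁ R₂ : Type*} [CommRing R₁] [CommRing R₂] (hred : IsReduced R₂)
    {n₁ n₂ : ℕ} (h₁ : (gammaZero R₁).Colorable n₁) (h₂ : (gammaZero R₂).Colorable n₂) :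
    (gammaZero (R₁ × R₂)).Colorable (n₁ + (n₂ - 1)) := by
  classical
  obtain ⟨c₁⟩ := h₁
  obtain ⟨c₂⟩ := h₂
  have key : ∀ y : R₂, y ≠ 0 → c₂ y ≠ c₂ 0 := fun y hy =>
    c₂.valid (show (gammaZero R₂).Adj y 0 from ⟨hy, mul_zero y⟩)
  have hn₂ : 0 < n₂ := (c₂ 0).pos
  let C : (gammaZero (R₁ × R₂)).Coloring (Fin n₁ ⊕ {a : Fin n₂ // a ≠ c₂ 0}) := by
    refine Coloring.mk
      (fun p => if h : p.2 = 0 then Sum.inl (c₁ p.1) else Sum.inr ⟨c₂ p.2, key p.2 h⟩) ?_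
    rintro ⟨x, y⟩ ⟨x', y'⟩ ⟨hne, hmul⟩
    have hm1 : x * x' = 0 := congrArg Prod.fst hmul
    have hm2 : y * y' = 0 := congrArg Prod.snd hmul
    by_cases hy : y = 0 <;> by_cases hy' : y' = 0 <;>
      simp only [dif_pos, dif_neg, hy, hy', dite_true, dite_false, ne_eq,
        Sum.inl.injEq, Sum.inr.injEq, reduceCtorEq, not_false_eq_true, Subtype.mk.injEq]
    · -- both second coordinates zero
      have hxx : x ≠ x' := fun h => hne (by subst h; rw [hy, hy'])
      exact c₁.valid (show (gammaZero R₁).Adj x x' from ⟨hxx, hm1⟩)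
    · -- y ≠ y' since R₂ reduced
      have hyy : y ≠ y' := by
        intro h
        subst h
        exact hy (hred.eq_zero y ⟨2, by rw [pow_two]; exact hm2⟩)
      exact c₂.valid (show (gammaZero R₂).Adj y y' from ⟨hyy, hm2⟩)
  have := C.colorable
  have hcard : Fintype.card (Fin n₁ ⊕ {a : Fin n₂ // a ≠ c₂ 0}) = n₁ + (n₂ - 1) := by
    rw [Fintype.card_sum, Fintype.card_fin]
    congr 1
    have : Fintype.card {a : Fin n₂ // ¬ a = c₂ 0} =
        Fintype.card (Fin n₂) - Fintype.card {a : Fin n₂ // a = c₂ 0} :=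
      Fintype.card_subtype_compl _
    simpa [Fintype.card_subtype_eq] using this
  rwa [hcard] at this

open SimpleGraph in
lemma gamma_lower {R₁ R₂ : Type*} [CommRing R₁] [CommRing R₂] {n : ℕ}
    (h : (gammaZero (R₁ × R₂)).Colorable n) :
    ∃ a b : ℕ, (gammaZero R₁).Colorable a ∧ (gammaZero R₂).Colorable b ∧ a + b ≤ n + 1 := by
  classical
  obtain ⟨c⟩ := h
  let A : Finset (Fin n) := Finset.univ.filter (fun t => ∃ x : R₁, c (x, 0) = t)
  let B : Finset (Fin n) := Finset.univ.filter (fun t => ∃ y : R₂, c (0, y) = t)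
  have CA : (gammaZero R₁).Coloring {t // t ∈ A} := by
    refine Coloring.mk (fun x => ⟨c (x, 0), by simp [A]⟩) ?_
    rintro x x' ⟨hne, hmul⟩
    simp only [ne_eq, Subtype.mk.injEq]
    exact c.valid (show (gammaZero (R₁ × R₂)).Adj (x, 0) (x', 0) from
      ⟨fun h => hne (congrArg Prod.fst h), by simp [Prod.ext_iff, hmul]⟩)
  have CB : (gammaZero R₂).Coloring {t // t ∈ B} := by
    refine Coloring.mk (fun y => ⟨c (0, y), by simp [B]⟩) ?_
    rintro y y' ⟨hne, hmul⟩
    simp only [ne_eq, Subtype.mk.injEq]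
    exact c.valid (show (gammaZero (R₁ × R₂)).Adj (0, y) (0, y') from
      ⟨fun h => hne (congrArg Prod.snd h), by simp [Prod.ext_iff, hmul]⟩)
  refine ⟨A.card, B.card, ?_, ?_, ?_⟩
  · simpa [Fintype.card_coe] using CA.colorable
  · simpa [Fintype.card_coe] using CB.colorable
  · have hinter : A ∩ B = {c (0, 0)} := by
      apply Finset.Subset.antisymm
      · intro t ht
        rw [Finset.mem_inter] at ht
        obtain ⟨x, hx⟩ := (Finset.mem_filter.mp ht.1).2
        obtain ⟨y, hy⟩ := (Finset.mem_filter.mp ht.2).2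
        rw [Finset.mem_singleton]
        by_cases hxy : ((x, 0) : R₁ × R₂) = (0, y)
        · have hy0 : (0 : R₂) = y := congrArg Prod.snd hxy
          rw [← hy, ← hy0]
        · exact absurd (hx.trans hy.symm)
            (c.valid (show (gammaZero (R₁ × R₂)).Adj (x, 0) (0, y) from
              ⟨hxy, by simp [Prod.ext_iff]⟩))
      · intro t ht
        rw [Finset.mem_singleton] at ht
        subst ht
        refine Finset.mem_inter.mpr ⟨?_, ?_⟩
        · exact Finset.mem_filter.mpr ⟨Finset.mem_univ _, ⟨0, rfl⟩⟩
        · exact Finset.mem_filter.mpr ⟨Finset.mem_univ _, ⟨0, rfl⟩⟩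
    have h1 : (A ∪ B).card + (A ∩ B).card = A.card + B.card :=
      Finset.card_union_add_card_inter A B
    have h2 : (A ∪ B).card ≤ n := by
      simpa using Finset.card_le_univ (A ∪ B)
    rw [hinter, Finset.card_singleton] at h1
    omega

theorem stmt6 (R₁ R₂ : Type*) [CommRing R₁] [CommRing R₂] (hred : IsReduced R₂) :
    (gammaZero (R₁ × R₂)).chromaticNumber =
      (gammaZero R₁).chromaticNumber + (gammaZero R₂).chromaticNumber - 1 := by
  refine le_antisymm ?_ ?_
  · have hone : AddLECancellable (1 : ℕ∞) := ENat.addLECancellable_of_ne_top (by simp)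
    have key : (gammaZero (R₁ × R₂)).chromaticNumber + 1 ≤
        (gammaZero R₁).chromaticNumber + (gammaZero R₂).chromaticNumber := ?_
    · calc (gammaZero (R₁ × R₂)).chromaticNumber
          = (gammaZero (R₁ × R₂)).chromaticNumber + 1 - 1 :=
            (hone.add_tsub_cancel_right).symm
        _ ≤ (gammaZero R₁).chromaticNumber + (gammaZero R₂).chromaticNumber - 1 :=
            tsub_le_tsub_right key 1
    by_cases h₁ : (gammaZero R₁).chromaticNumber = ⊤
    · rw [h₁, top_add]; exact le_top
    by_cases h₂ : (gammaZero R₂).chromaticNumber = ⊤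
    · rw [h₂, add_top]; exact le_top
    obtain ⟨C₁⟩ := SimpleGraph.colorable_of_chromaticNumber_ne_top h₁
    obtain ⟨C₂⟩ := SimpleGraph.colorable_of_chromaticNumber_ne_top h₂
    set m₁ := (gammaZero R₁).chromaticNumber.toNat with hm₁
    set m₂ := (gammaZero R₂).chromaticNumber.toNat with hm₂
    have e₁ : (gammaZero R₁).chromaticNumber = (m₁ : ℕ∞) := (ENat.coe_toNat h₁).symm
    have e₂ : (gammaZero R₂).chromaticNumber = (m₂ : ℕ∞) := (ENat.coe_toNat h₂).symm
    have hcol := gamma_upper hred (Nonempty.intro C₁) (Nonempty.intro C₂)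
    have hle := hcol.chromaticNumber_le
    have hm₂pos : 0 < m₂ := (C₂ 0).pos
    calc (gammaZero (R₁ × R₂)).chromaticNumber + 1
        ≤ ((m₁ + (m₂ - 1) : ℕ) : ℕ∞) + 1 := by exact add_le_add hle le_rfl
      _ = ((m₁ + m₂ : ℕ) : ℕ∞) := by
          exact_mod_cast congrArg (Nat.cast : ℕ → ℕ∞)
            (by omega : m₁ + (m₂ - 1) + 1 = m₁ + m₂)
      _ = (gammaZero R₁).chromaticNumber + (gammaZero R₂).chromaticNumber := by
          rw [e₁, e₂, Nat.cast_add]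
  · rw [tsub_le_iff_right]
    by_cases hp : (gammaZero (R₁ × R₂)).chromaticNumber = ⊤
    · rw [hp, top_add]; exact le_top
    have hcol := SimpleGraph.colorable_of_chromaticNumber_ne_top hp
    set m := (gammaZero (R₁ × R₂)).chromaticNumber.toNat with hm
    have e : (gammaZero (R₁ × R₂)).chromaticNumber = (m : ℕ∞) := (ENat.coe_toNat hp).symm
    obtain ⟨a, b, ha, hb, hab⟩ := gamma_lower hcol
    calc (gammaZero R₁).chromaticNumber + (gammaZero R₂).chromaticNumber
        ≤ ((a : ℕ∞)) + ((b : ℕ∞)) := add_le_add ha.chromaticNumber_le hb.chromaticNumber_le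
      _ = ((a + b : ℕ) : ℕ∞) := by rw [Nat.cast_add]
      _ ≤ ((m + 1 : ℕ) : ℕ∞) := by exact_mod_cast hab
      _ = (gammaZero (R₁ × R₂)).chromaticNumber + 1 := by rw [e, Nat.cast_add, Nat.cast_one]
end

section
/- Let R₂ be a reduced commutative ring with 1 and let T be an independent set of Γ₀(R₂) with 0 ∉ T. Then for any commutative ring R₁ with 1, the set R₁ × T is an independent set of Γ₀(R₁ × R₂). -/
theorem stmt7 (R₁ R₂ : Type*) [CommRing R₁] [CommRing R₂] (hred : IsReduced R₂)
    (T : Set R₂) (hT : ∀ x ∈ T, ∀ y ∈ T, ¬ (gammaZero R₂).Adj x y) (h0 : (0 : R₂) ∉ T) :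
    ∀ x ∈ (Set.univ : Set R₁) ×ˢ T, ∀ y ∈ (Set.univ : Set R₁) ×ˢ T,
      ¬ (gammaZero (R₁ × R₂)).Adj x y := by
  rintro ⟨a, s⟩ ⟨-, hs⟩ ⟨b, t⟩ ⟨-, ht⟩ ⟨hne, hmul⟩
  have hst : s * t = 0 := congrArg Prod.snd hmul
  by_cases h : s = t
  · subst h
    exact h0 (IsNilpotent.eq_zero (⟨2, by simpa [sq] using hst⟩ : IsNilpotent s) ▸ hs)
  · exact hT s hs t ht ⟨h, hst⟩
end

section
/- Let R₁ and R₂ be commutative rings with 1 and R = R₁ × R₂. Then ω(Γ₀(R)) ≥ ω(Γ₀(R₁)) + ω(Γ₀(R₂)) − 1. -/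
theorem stmt8 (R₁ R₂ : Type*) [CommRing R₁] [CommRing R₂] :
    cliqueNumE (gammaZero (R₁ × R₂)) ≥
      cliqueNumE (gammaZero R₁) + cliqueNumE (gammaZero R₂) - 1 := by
  rw [ge_iff_le, tsub_le_iff_right]
  unfold cliqueNumE
  refine ENat.biSup_add_biSup_le' ⟨∅, by simp [Set.Pairwise]⟩ ⟨∅, by simp [Set.Pairwise]⟩ ?_
  intro s₁ h₁ s₂ h₂
  classical
  set t : Finset (R₁ × R₂) :=
    s₁.image (fun x => (x, (0 : R₂))) ∪ s₂.image (fun y => ((0 : R₁), y)) with ht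
  have hclique : (gammaZero (R₁ × R₂)).IsClique (t : Set (R₁ × R₂)) := by
    intro a ha b hb hab
    simp only [ht, Finset.coe_union, Finset.coe_image, Set.mem_union, Set.mem_image,
      Finset.mem_coe] at ha hb
    refine ⟨hab, ?_⟩
    rcases ha with ⟨x, hx, rfl⟩ | ⟨y, hy, rfl⟩ <;> rcases hb with ⟨x', hx', rfl⟩ | ⟨y', hy', rfl⟩
    · have hxx : x ≠ x' := fun h => hab (by rw [h])
      have := (h₁ hx hx' hxx).2
      simp [Prod.ext_iff, this]
    · simp [Prod.ext_iff]
    · simp [Prod.ext_iff]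
    · have hyy : y ≠ y' := fun h => hab (by rw [h])
      have := (h₂ hy hy' hyy).2
      simp [Prod.ext_iff, this]
  have hcard : s₁.card + s₂.card ≤ t.card + 1 := by
    have hinj₁ : Set.InjOn (fun x : R₁ => (x, (0 : R₂))) s₁ := fun a _ b _ h => by
      simpa [Prod.ext_iff] using h
    have hinj₂ : Set.InjOn (fun y : R₂ => ((0 : R₁), y)) s₂ := fun a _ b _ h => by
      simpa [Prod.ext_iff] using h
    have hc₁ : (s₁.image (fun x => (x, (0 : R₂)))).card = s₁.card :=
      Finset.card_image_of_injOn hinj₁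
    have hc₂ : (s₂.image (fun y => ((0 : R₁), y))).card = s₂.card :=
      Finset.card_image_of_injOn hinj₂
    have hintsub : s₁.image (fun x => (x, (0 : R₂))) ∩ s₂.image (fun y => ((0 : R₁), y)) ⊆
        {((0 : R₁), (0 : R₂))} := by
      intro a ha
      simp only [Finset.mem_inter, Finset.mem_image] at ha
      obtain ⟨⟨x, _, rfl⟩, ⟨y, _, hy⟩⟩ := ha
      rw [Finset.mem_singleton]
      simp only [Prod.ext_iff] at hy
      exact Prod.ext hy.1.symm rfl
    have := Finset.card_union_add_card_inter (s₁.image (fun x => (x, (0 : R₂))))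
      (s₂.image (fun y => ((0 : R₁), y)))
    have hle : (s₁.image (fun x => (x, (0 : R₂))) ∩
        s₂.image (fun y => ((0 : R₁), y))).card ≤ 1 := by
      simpa using Finset.card_le_card hintsub
    rw [← ht] at this
    omega
  calc (s₁.card : ℕ∞) + s₂.card ≤ (t.card : ℕ∞) + 1 := by
        exact_mod_cast hcard
    _ ≤ (⨆ (s : Finset (R₁ × R₂)) (_ : (gammaZero (R₁ × R₂)).IsClique (s : Set (R₁ × R₂))),
          (s.card : ℕ∞)) + 1 := by
        gcongr
        exact le_iSup₂_of_le t hclique le_rfl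
end

section
/- Let R₁ and R₂ be commutative rings with 1 such that R₂ is reduced (has no nonzero nilpotent elements), and let R = R₁ × R₂. Then ω(Γ₀(R)) = ω(Γ₀(R₁)) + ω(Γ₀(R₂)) − 1. -/
lemma cliqueNumE_eq_subtype {V : Type*} (G : SimpleGraph V) :
    cliqueNumE G = ⨆ s : {s : Finset V // G.IsClique (s : Set V)}, ((s : Finset V).card : ℕ∞) := by
  rw [cliqueNumE, iSup_subtype']

instance cliqueSubtypeNonempty {V : Type*} (G : SimpleGraph V) :
    Nonempty {s : Finset V // G.IsClique (s : Set V)} :=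
  ⟨⟨∅, by simp⟩⟩

lemma card_le_cliqueNumE {V : Type*} {G : SimpleGraph V} {s : Finset V}
    (hs : G.IsClique (s : Set V)) : (s.card : ℕ∞) ≤ cliqueNumE G := by
  rw [cliqueNumE_eq_subtype]
  exact le_iSup (fun t : {s : Finset V // G.IsClique (s : Set V)} => ((t : Finset V).card : ℕ∞))
    ⟨s, hs⟩

/-- Upper bound decomposition: a clique in the product gives cliques in the factors. -/
lemma clique_decompose (R₁ R₂ : Type*) [CommRing R₁] [CommRing R₂] (hred : IsReduced R₂)
    (u : Finset (R₁ × R₂)) (hu : (gammaZero (R₁ × R₂)).IsClique (u : Set (R₁ × R₂))) :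
    ∃ (t₁ : Finset R₁) (t₂ : Finset R₂),
      (gammaZero R₁).IsClique (t₁ : Set R₁) ∧ (gammaZero R₂).IsClique (t₂ : Set R₂) ∧
      u.card + 1 = t₁.card + t₂.card := by
  classical
  set u₁ := u.filter (fun p => p.2 = 0) with hu₁
  set u₂ := u.filter (fun p => p.2 ≠ 0) with hu₂
  refine ⟨u₁.image Prod.fst, insert 0 (u₂.image Prod.snd), ?_, ?_, ?_⟩
  · -- clique in R₁
    intro a ha b hb hab
    simp only [Finset.coe_image, Set.mem_image, Finset.mem_coe] at ha hb
    obtain ⟨p, hp, rfl⟩ := ha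
    obtain ⟨q, hq, rfl⟩ := hb
    rw [hu₁, Finset.mem_filter] at hp hq
    have hpq : p ≠ q := fun h => hab (by rw [h])
    have := hu hp.1 hq.1 hpq
    refine ⟨hab, ?_⟩
    have := congrArg Prod.fst this.2
    simpa using this
  · -- clique in R₂
    intro a ha b hb hab
    refine ⟨hab, ?_⟩
    simp only [Finset.coe_insert, Set.mem_insert_iff, Finset.coe_image, Set.mem_image,
      Finset.mem_coe] at ha hb
    rcases ha with rfl | ⟨p, hp, rfl⟩
    · exact zero_mul _
    rcases hb with rfl | ⟨q, hq, rfl⟩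
    · exact mul_zero _
    rw [hu₂, Finset.mem_filter] at hp hq
    have hpq : p ≠ q := fun h => hab (by rw [h])
    have := hu hp.1 hq.1 hpq
    have := congrArg Prod.snd this.2
    simpa using this
  · -- cards
    have h1 : (u₁.image Prod.fst).card = u₁.card := by
      apply Finset.card_image_of_injOn
      intro p hp q hq h
      rw [hu₁, Finset.coe_filter, Set.mem_setOf_eq] at hp hq
      exact Prod.ext h (hp.2.trans hq.2.symm)
    have h2 : (u₂.image Prod.snd).card = u₂.card := by
      apply Finset.card_image_of_injOn
      intro p hp q hq h
      rw [hu₂, Finset.coe_filter, Set.mem_setOf_eq] at hp hq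
      by_contra hpq
      have hadj := hu (Finset.mem_coe.2 hp.1) (Finset.mem_coe.2 hq.1) hpq
      have : p.2 * q.2 = 0 := by
        have := congrArg Prod.snd hadj.2; simpa using this
      rw [← h] at this
      exact hp.2 (hred.eq_zero p.2 ⟨2, by rw [pow_two]; exact this⟩)
    have h0 : (0 : R₂) ∉ u₂.image Prod.snd := by
      simp only [Finset.mem_image, not_exists]
      rintro p ⟨hp, hp0⟩
      rw [hu₂, Finset.mem_filter] at hp
      exact hp.2 hp0
    rw [Finset.card_insert_of_notMem h0, h1, h2]
    have := Finset.card_filter_add_card_filter_not (s := u) (p := fun p => p.2 = 0)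
    simp only [← ne_eq] at this
    rw [← hu₁, ← hu₂] at this
    omega

/-- Lower bound construction: cliques in the factors give a clique in the product. -/
lemma clique_combine (R₁ R₂ : Type*) [CommRing R₁] [CommRing R₂]
    (s : Finset R₁) (t : Finset R₂)
    (hs : (gammaZero R₁).IsClique (s : Set R₁)) (ht : (gammaZero R₂).IsClique (t : Set R₂)) :
    ∃ u : Finset (R₁ × R₂), (gammaZero (R₁ × R₂)).IsClique (u : Set (R₁ × R₂)) ∧
      s.card + t.card ≤ u.card + 1 := by
  classical
  set s₀ := s.erase 0 with hs₀
  set t₀ := t.erase 0 with ht₀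
  set u : Finset (R₁ × R₂) :=
    insert (0, 0) (s₀.image (fun a => (a, (0 : R₂))) ∪ t₀.image (fun b => ((0 : R₁), b))) with hu
  have hmem : ∀ x : R₁ × R₂, x ∈ u →
      x = (0, 0) ∨ (x.1 ∈ s₀ ∧ x.2 = 0) ∨ (x.1 = 0 ∧ x.2 ∈ t₀) := by
    intro x hx
    rw [hu, Finset.mem_insert, Finset.mem_union] at hx
    rcases hx with h | h | h
    · exact Or.inl h
    · simp only [Finset.mem_image] at h
      obtain ⟨a, ha, rfl⟩ := h
      exact Or.inr (Or.inl ⟨ha, rfl⟩)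
    · simp only [Finset.mem_image] at h
      obtain ⟨b, hb, rfl⟩ := h
      exact Or.inr (Or.inr ⟨rfl, hb⟩)
  refine ⟨u, ?_, ?_⟩
  · intro x hx y hy hxy
    refine ⟨hxy, ?_⟩
    have hx' := hmem x (Finset.mem_coe.1 hx)
    have hy' := hmem y (Finset.mem_coe.1 hy)
    have hmul : x * y = (x.1 * y.1, x.2 * y.2) := rfl
    rw [hmul, Prod.mk_eq_zero]
    rcases hx' with rfl | ⟨hx1, hx2⟩ | ⟨hx1, hx2⟩
    · constructor <;> simp
    · rcases hy' with rfl | ⟨hy1, hy2⟩ | ⟨hy1, hy2⟩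
      · constructor <;> simp [hx2]
      · refine ⟨?_, by simp [hx2]⟩
        have hne : x.1 ≠ y.1 := by
          intro h
          exact hxy (Prod.ext h (hx2.trans hy2.symm))
        exact (hs (Finset.mem_coe.2 (Finset.mem_of_mem_erase hx1))
          (Finset.mem_coe.2 (Finset.mem_of_mem_erase hy1)) hne).2
      · exact ⟨by simp [hy1], by simp [hx2]⟩
    · rcases hy' with rfl | ⟨hy1, hy2⟩ | ⟨hy1, hy2⟩
      · constructor <;> simp [hx1]
      · exact ⟨by simp [hx1], by simp [hy2]⟩
      · refine ⟨by simp [hx1], ?_⟩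
        have hne : x.2 ≠ y.2 := by
          intro h
          exact hxy (Prod.ext (hx1.trans hy1.symm) h)
        exact (ht (Finset.mem_coe.2 (Finset.mem_of_mem_erase hx2))
          (Finset.mem_coe.2 (Finset.mem_of_mem_erase hy2)) hne).2
  · -- cardinality
    have hdisj : Disjoint (s₀.image (fun a => (a, (0 : R₂))))
        (t₀.image (fun b => ((0 : R₁), b))) := by
      rw [Finset.disjoint_left]
      rintro x hx hx'
      simp only [Finset.mem_image] at hx hx'
      obtain ⟨a, ha, rfl⟩ := hx
      obtain ⟨b, hb, hab⟩ := hx'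
      have : a = 0 := (congrArg Prod.fst hab).symm
      exact (Finset.mem_erase.1 ha).1 this
    have h00 : ((0 : R₁), (0 : R₂)) ∉
        s₀.image (fun a => (a, (0 : R₂))) ∪ t₀.image (fun b => ((0 : R₁), b)) := by
      rw [Finset.mem_union]
      rintro (h | h) <;> simp only [Finset.mem_image] at h
      · obtain ⟨a, ha, hab⟩ := h
        have : a = 0 := congrArg Prod.fst hab
        exact (Finset.mem_erase.1 ha).1 this
      · obtain ⟨b, hb, hab⟩ := h
        have : b = 0 := congrArg Prod.snd hab
        exact (Finset.mem_erase.1 hb).1 this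
    have hcard : u.card = s₀.card + t₀.card + 1 := by
      rw [hu, Finset.card_insert_of_notMem h00, Finset.card_union_of_disjoint hdisj,
        Finset.card_image_of_injective _ (fun a b h => congrArg Prod.fst h),
        Finset.card_image_of_injective _ (fun a b h => congrArg Prod.snd h)]
    have hscard : s.card ≤ s₀.card + 1 := by
      have : s ⊆ insert 0 s₀ := by
        intro x hx
        rcases eq_or_ne x 0 with rfl | hx0
        · exact Finset.mem_insert_self _ _
        · exact Finset.mem_insert_of_mem (Finset.mem_erase.2 ⟨hx0, hx⟩)
      calc s.card ≤ (insert 0 s₀).card := Finset.card_le_card this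
        _ ≤ s₀.card + 1 := Finset.card_insert_le _ _
    have htcard : t.card ≤ t₀.card + 1 := by
      have : t ⊆ insert 0 t₀ := by
        intro x hx
        rcases eq_or_ne x 0 with rfl | hx0
        · exact Finset.mem_insert_self _ _
        · exact Finset.mem_insert_of_mem (Finset.mem_erase.2 ⟨hx0, hx⟩)
      calc t.card ≤ (insert 0 t₀).card := Finset.card_le_card this
        _ ≤ t₀.card + 1 := Finset.card_insert_le _ _
    omega

theorem stmt9 (R₁ R₂ : Type*) [CommRing R₁] [CommRing R₂] (hred : IsReduced R₂) :
    cliqueNumE (gammaZero (R₁ × R₂)) =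
      cliqueNumE (gammaZero R₁) + cliqueNumE (gammaZero R₂) - 1 := by
  set M := cliqueNumE (gammaZero (R₁ × R₂)) with hM
  set N₁ := cliqueNumE (gammaZero R₁) with hN₁
  set N₂ := cliqueNumE (gammaZero R₂) with hN₂
  have key : M + 1 = N₁ + N₂ := by
    apply le_antisymm
    · -- M + 1 ≤ N₁ + N₂
      rw [hM, cliqueNumE_eq_subtype, ENat.iSup_add]
      apply iSup_le
      rintro ⟨u, hu⟩
      obtain ⟨t₁, t₂, ht₁, ht₂, hcard⟩ := clique_decompose R₁ R₂ hred u hu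
      calc ((u.card : ℕ∞) + 1) = ((t₁.card : ℕ∞) + t₂.card) := by
            rw [← Nat.cast_one, ← Nat.cast_add, ← Nat.cast_add, hcard]
        _ ≤ N₁ + N₂ := add_le_add (card_le_cliqueNumE ht₁) (card_le_cliqueNumE ht₂)
    · -- N₁ + N₂ ≤ M + 1
      rw [hN₁, hN₂, cliqueNumE_eq_subtype, cliqueNumE_eq_subtype]
      apply ENat.iSup_add_iSup_le
      rintro ⟨s, hs⟩ ⟨t, ht⟩
      obtain ⟨u, hu, hcard⟩ := clique_combine R₁ R₂ s t hs ht
      calc ((s.card : ℕ∞) + t.card) = ((s.card + t.card : ℕ) : ℕ∞) := by push_cast; ring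
        _ ≤ ((u.card + 1 : ℕ) : ℕ∞) := by exact_mod_cast hcard
        _ = (u.card : ℕ∞) + 1 := by push_cast; ring
        _ ≤ M + 1 := add_le_add_left (card_le_cliqueNumE hu) 1
  have hM1 : M = M + 1 - 1 := by
    cases M with
    | top => rfl
    | coe n => rw [← ENat.coe_one, ← ENat.coe_add, ← ENat.coe_sub]; simp
  rw [hM1, key]
end

section
/- Let R = R₁ × ⋯ × R_k be a finite product of commutative rings with 1, where each R_i is an integral domain and k ≥ 1. Then χ(Γ₀(R)) = ω(Γ₀(R)) = k + 1. -/
noncomputable def piColoring (k : ℕ) (R : Fin k → Type*) [∀ i, CommRing (R i)]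
    [∀ i, IsDomain (R i)] : (gammaZero (∀ i, R i)).Coloring (Fin (k + 1)) := by
  classical
  refine SimpleGraph.Coloring.mk
    (fun x => if h : x = 0 then Fin.last k else (Function.ne_iff.mp h).choose.castSucc) ?_
  rintro x y ⟨hxy, hmul⟩
  by_cases hx : x = 0
  · have hy : y ≠ 0 := fun h => hxy (by rw [hx, h])
    simp only [hx, dif_pos rfl, dif_neg hy]
    exact fun h => absurd h.symm (Fin.castSucc_lt_last _).ne
  · by_cases hy : y = 0
    · simp only [dif_neg hx, dif_pos hy]
      exact fun h => absurd h (Fin.castSucc_lt_last _).ne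
    · simp only [dif_neg hx, dif_neg hy]
      intro h
      have h' : (Function.ne_iff.mp hx).choose = (Function.ne_iff.mp hy).choose :=
        Fin.castSucc_injective _ h
      have h1 := (Function.ne_iff.mp hx).choose_spec
      have h2 := (Function.ne_iff.mp hy).choose_spec
      rw [h'] at h1
      have : (x * y) (Function.ne_iff.mp hy).choose = 0 := by rw [hmul]; rfl
      rw [Pi.mul_apply] at this
      exact mul_ne_zero (by simpa using h1) (by simpa using h2) this

theorem stmt10 (k : ℕ) (hk : 1 ≤ k) (R : Fin k → Type*) [∀ i, CommRing (R i)]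
    [∀ i, IsDomain (R i)] :
    (gammaZero (∀ i, R i)).chromaticNumber = cliqueNumE (gammaZero (∀ i, R i)) ∧
    cliqueNumE (gammaZero (∀ i, R i)) = ((k + 1 : ℕ) : ℕ∞) := by
  classical
  set G := gammaZero (∀ i, R i) with hG
  -- the explicit clique
  set e : Fin k → (∀ i, R i) := fun i => Pi.single i (1 : R i) with he
  have he_ne : ∀ i, e i ≠ 0 := fun i h => by
    have := congrFun h i
    simp [he] at this
  have he_inj : Function.Injective e := by
    intro i j hij
    by_contra hne
    have := congrFun hij i
    simp [he, Pi.single_apply, hne] at this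
  set s : Finset (∀ i, R i) := insert 0 (Finset.image e Finset.univ) with hs
  have hcard : s.card = k + 1 := by
    rw [hs, Finset.card_insert_of_notMem, Finset.card_image_of_injective _ he_inj,
      Finset.card_univ, Fintype.card_fin]
    simp only [Finset.mem_image]
    rintro ⟨i, -, hi⟩
    exact he_ne i hi
  have hclique : G.IsClique (s : Set (∀ i, R i)) := by
    intro x hx y hy hxy
    simp only [hs, Finset.coe_insert, Set.mem_insert_iff, Finset.coe_image,
      Set.mem_image, Finset.mem_coe, Finset.mem_univ] at hx hy
    refine ⟨hxy, ?_⟩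
    rcases hx with rfl | ⟨i, -, rfl⟩
    · simp
    rcases hy with rfl | ⟨j, -, rfl⟩
    · simp
    have hij : i ≠ j := fun h => hxy (by rw [h])
    funext l
    simp only [he, Pi.mul_apply, Pi.single_apply, Pi.zero_apply]
    by_cases hl : l = i
    · subst hl; simp [Ne.symm hij]
    · simp [Ne.symm hl]
  have hclique_le : ((k + 1 : ℕ) : ℕ∞) ≤ cliqueNumE G := by
    rw [← hcard]
    exact le_iSup₂ (f := fun (s : Finset (∀ i, R i)) (_ : G.IsClique (s : Set (∀ i, R i))) =>
      ((s.card : ℕ∞))) s hclique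
  have hclique_chrom : cliqueNumE G ≤ G.chromaticNumber := by
    refine iSup₂_le fun t ht => ?_
    exact ht.card_le_chromaticNumber
  have hchrom_le : G.chromaticNumber ≤ ((k + 1 : ℕ) : ℕ∞) :=
    SimpleGraph.Colorable.chromaticNumber_le ⟨piColoring k R⟩
  have h1 : cliqueNumE G = ((k + 1 : ℕ) : ℕ∞) :=
    le_antisymm (hclique_chrom.trans hchrom_le) hclique_le
  refine ⟨le_antisymm ?_ hclique_chrom, h1⟩
  rw [h1]; exact hchrom_le
end

section
/- Let R = R₁ × ⋯ × R_k be a finite product of commutative rings with 1, where each R_i satisfies χ(Γ₀(R_i)) < ∞. Suppose that for every i there is a finite subset S_i of R_i such that: (i) S_i is a maximal clique of Γ₀(R_i) (a clique not properly contained in any other clique); (ii) for all a, b ∈ R_i \ S_i (including a = b), ab ≠ 0. Let N_i = {a ∈ S_i : a² = 0}, n_i = |N_i| and s_i = |S_i|. Then χ(Γ₀(R)) = ω(Γ₀(R)) = ∏_{i=1}^k n_i + ∑_{i=1}^k (s_i − n_i). -/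
open Classical in
/-- The elements of `S` with square zero. -/
noncomputable def Nfin {R : Type*} [CommRing R] (S : Finset R) : Finset R :=
  S.filter (fun a => a ^ 2 = 0)

open Classical in
/-- The elements of `S` with nonzero square. -/
noncomputable def Mfin {R : Type*} [CommRing R] (S : Finset R) : Finset R :=
  S.filter (fun a => ¬ a ^ 2 = 0)

lemma mem_Nfin {R : Type*} [CommRing R] {S : Finset R} {a : R} :
    a ∈ Nfin S ↔ a ∈ S ∧ a ^ 2 = 0 := by
  simp [Nfin]

lemma mem_Mfin {R : Type*} [CommRing R] {S : Finset R} {a : R} :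
    a ∈ Mfin S ↔ a ∈ S ∧ ¬ a ^ 2 = 0 := by
  simp [Mfin]

lemma card_Mfin {R : Type*} [CommRing R] (S : Finset R) :
    (Mfin S).card = S.card - (Nfin S).card := by
  classical
  have h := Finset.card_filter_add_card_filter_not
    (s := S) (p := fun a : R => a ^ 2 = 0)
  have h1 : (S.filter (fun a : R => a ^ 2 = 0)).card = (Nfin S).card := by
    congr 1
  have h2 : (S.filter (fun a : R => ¬ a ^ 2 = 0)).card = (Mfin S).card := by
    congr 1
  omega

section single

variable {R : Type*} [CommRing R] {S : Finset R}

lemma zero_mem_S (hclique : (gammaZero R).IsClique (S : Set R))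
    (hmaxcl : ∀ t : Set R, (gammaZero R).IsClique t → (S : Set R) ⊆ t → t = (S : Set R)) :
    (0 : R) ∈ S := by
  have h : ((S : Set R) ∪ {0}) = (S : Set R) := by
    apply hmaxcl
    · intro x hx y hy hxy
      refine ⟨hxy, ?_⟩
      rcases hx with hx | hx
      · rcases hy with hy | hy
        · exact (hclique hx hy hxy).2
        · simp only [Set.mem_singleton_iff] at hy; subst hy; simp
      · simp only [Set.mem_singleton_iff] at hx; subst hx; simp
    · exact Set.subset_union_left
  have h0 : (0 : R) ∈ (S : Set R) := by
    rw [← h]; exact Set.mem_union_right _ rfl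
  exact_mod_cast h0

lemma exists_mul_ne_zero (hclique : (gammaZero R).IsClique (S : Set R))
    (hmaxcl : ∀ t : Set R, (gammaZero R).IsClique t → (S : Set R) ⊆ t → t = (S : Set R))
    (a : R) (ha : a ∉ S) : ∃ b ∈ S, a * b ≠ 0 := by
  by_contra h
  push_neg at h
  have hcl : (gammaZero R).IsClique ((S : Set R) ∪ {a}) := by
    intro x hx y hy hxy
    refine ⟨hxy, ?_⟩
    rcases hx with hx | hx
    · rcases hy with hy | hy
      · exact (hclique hx hy hxy).2
      · simp only [Set.mem_singleton_iff] at hy; subst hy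
        rw [mul_comm]; exact h x hx
    · simp only [Set.mem_singleton_iff] at hx; subst hx
      rcases hy with hy | hy
      · exact h y hy
      · simp only [Set.mem_singleton_iff] at hy; exact absurd hy.symm hxy
  have heq := hmaxcl _ hcl Set.subset_union_left
  have : a ∈ (S : Set R) := by
    rw [← heq]; exact Set.mem_union_right _ rfl
  exact ha (by exact_mod_cast this)

end single

section prod

variable {k : ℕ} {R : Fin k → Type*} [∀ i, CommRing (R i)]

/-- The color type: one color for each element of `∏ N_i` plus one color for
each pair `(i, a)` with `a ∈ S_i`, `a² ≠ 0`. -/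
abbrev ColorT (S : ∀ i, Finset (R i)) : Type _ :=
  (∀ i, {a : R i // a ∈ Nfin (S i)}) ⊕ (Σ i, {a : R i // a ∈ Mfin (S i)})

/-- `c` is an admissible color for `x`. -/
def GoodCol (S : ∀ i, Finset (R i)) (x : ∀ i, R i) : ColorT S → Prop
  | .inl z => (∀ i, x i ∈ S i → x i = (z i : R i)) ∧
      ((∀ i, x i = (z i : R i)) ∨ ∃ j, x j ∉ S j ∧ x j * (z j : R j) ≠ 0)
  | .inr ⟨i, a⟩ => x i = (a : R i) ∨ (x i ∉ S i ∧ x i * (a : R i) ≠ 0)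

lemma goodCol_proper (S : ∀ i, Finset (R i))
    (hout : ∀ i, ∀ a b : R i, a ∉ S i → b ∉ S i → a * b ≠ 0)
    {x y : ∀ i, R i} {c : ColorT S} (hx : GoodCol S x c) (hy : GoodCol S y c)
    (hne : x ≠ y) : ∃ i, x i * y i ≠ 0 := by
  match c with
  | .inl z =>
    obtain ⟨hx1, hx2⟩ := hx
    obtain ⟨hy1, hy2⟩ := hy
    rcases hx2 with hx2 | ⟨j, hj1, hj2⟩
    · rcases hy2 with hy2 | ⟨j, hj1, hj2⟩
      · exact absurd (funext fun i => (hx2 i).trans (hy2 i).symm) hne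
      · exact ⟨j, by rw [hx2 j, mul_comm]; exact hj2⟩
    · refine ⟨j, ?_⟩
      by_cases hyS : y j ∈ S j
      · rw [hy1 j hyS]; exact hj2
      · exact hout j _ _ hj1 hyS
  | .inr ⟨i, a⟩ =>
    have ha2 : ¬ (a : R i) ^ 2 = 0 := (mem_Mfin.mp a.2).2
    refine ⟨i, ?_⟩
    rcases hx with hx | ⟨hx1, hx2⟩
    · rcases hy with hy | ⟨hy1, hy2⟩
      · rw [hx, hy, ← pow_two]; exact ha2
      · rw [hx, mul_comm]; exact hy2
    · rcases hy with hy | ⟨hy1, hy2⟩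
      · rw [hy]; exact hx2
      · exact hout i _ _ hx1 hy1

lemma exists_goodCol (S : ∀ i, Finset (R i)) (hz : ∀ i, (0 : R i) ∈ S i)
    (hmax : ∀ i (a : R i), a ∉ S i → ∃ b ∈ S i, a * b ≠ 0) (x : ∀ i, R i) :
    ∃ c : ColorT S, GoodCol S x c := by
  classical
  by_cases h1 : ∃ i, x i ∈ S i ∧ ¬ x i ^ 2 = 0
  · obtain ⟨i, hi⟩ := h1
    exact ⟨.inr ⟨i, ⟨x i, mem_Mfin.mpr hi⟩⟩, Or.inl rfl⟩
  · push_neg at h1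
    by_cases h3 : ∃ j, x j ∉ S j
    · obtain ⟨j, hj⟩ := h3
      obtain ⟨b, hbS, hbne⟩ := hmax j (x j) hj
      by_cases hb2 : b ^ 2 = 0
      · -- color in ∏ N_i
        set z0 : ∀ i, {a : R i // a ∈ Nfin (S i)} := fun i =>
          if hi : x i ∈ S i then ⟨x i, mem_Nfin.mpr ⟨hi, h1 i hi⟩⟩
          else ⟨0, mem_Nfin.mpr ⟨hz i, by simp⟩⟩ with hz0
        refine ⟨.inl (Function.update z0 j ⟨b, mem_Nfin.mpr ⟨hbS, hb2⟩⟩),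
          ?_, Or.inr ⟨j, hj, ?_⟩⟩
        · intro i hi
          rcases eq_or_ne i j with rfl | hne
          · exact absurd hi hj
          · rw [Function.update_of_ne hne, hz0]
            simp [hi]
        · rw [Function.update_self]
          exact hbne
      · exact ⟨.inr ⟨j, ⟨b, mem_Mfin.mpr ⟨hbS, hb2⟩⟩⟩, Or.inr ⟨hj, hbne⟩⟩
    · push_neg at h3
      exact ⟨.inl (fun i => ⟨x i, mem_Nfin.mpr ⟨h3 i, h1 i (h3 i)⟩⟩),
        fun i _ => rfl, Or.inl (fun i => rfl)⟩

lemma colorable_bound (S : ∀ i, Finset (R i)) (hz : ∀ i, (0 : R i) ∈ S i)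
    (hmax : ∀ i (a : R i), a ∉ S i → ∃ b ∈ S i, a * b ≠ 0)
    (hout : ∀ i, ∀ a b : R i, a ∉ S i → b ∉ S i → a * b ≠ 0) :
    (gammaZero (∀ i, R i)).Colorable
      (∏ i, (Nfin (S i)).card + ∑ i, (Mfin (S i)).card) := by
  classical
  have key : ∀ x : ∀ i, R i, ∃ c : ColorT S, GoodCol S x c := exists_goodCol S hz hmax
  let f : (∀ i, R i) → ColorT S := fun x => (key x).choose
  have hf : ∀ x, GoodCol S x (f x) := fun x => (key x).choose_spec
  have col : (gammaZero (∀ i, R i)).Coloring (ColorT S) := by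
    refine SimpleGraph.Coloring.mk f ?_
    rintro x y ⟨hne, hmul⟩ hcf
    obtain ⟨i, hi⟩ := goodCol_proper S hout (hf x) (hcf ▸ hf y) hne
    exact hi (by simpa using congrFun hmul i)
  have hcard : Fintype.card (ColorT S)
      = ∏ i, (Nfin (S i)).card + ∑ i, (Mfin (S i)).card := by
    rw [Fintype.card_sum, Fintype.card_sigma, Fintype.card_pi]
    simp only [Fintype.card_coe]
  have hc := col.colorable
  rw [hcard] at hc
  exact hc

lemma big_clique (S : ∀ i, Finset (R i))
    (hclique : ∀ i, (gammaZero (R i)).IsClique ((S i : Set (R i)))) :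
    ∃ K : Finset (∀ i, R i), (gammaZero (∀ i, R i)).IsClique (K : Set (∀ i, R i)) ∧
      K.card = ∏ i, (Nfin (S i)).card + ∑ i, (Mfin (S i)).card := by
  classical
  -- products of any two elements of S_i, at least one of which has square zero
  have mulN : ∀ i (a b : R i), a ∈ Nfin (S i) → b ∈ Nfin (S i) → a * b = 0 := by
    intro i a b ha hb
    rcases eq_or_ne a b with rfl | hne
    · rw [← pow_two]; exact (mem_Nfin.mp ha).2
    · exact (hclique i (mem_Nfin.mp ha).1 (mem_Nfin.mp hb).1 hne).2
  have mulNM : ∀ i (a b : R i), a ∈ Nfin (S i) → b ∈ Mfin (S i) → a * b = 0 := by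
    intro i a b ha hb
    have hne : a ≠ b := by
      rintro rfl
      exact (mem_Mfin.mp hb).2 (mem_Nfin.mp ha).2
    exact (hclique i (mem_Nfin.mp ha).1 (mem_Mfin.mp hb).1 hne).2
  let A : Finset (∀ i, R i) := Fintype.piFinset (fun i => Nfin (S i))
  let B : Finset (∀ i, R i) :=
    Finset.univ.biUnion (fun i => (Mfin (S i)).image (fun a => Pi.single i a))
  have hB : ∀ x ∈ B, ∃ i, ∃ a, a ∈ Mfin (S i) ∧ x = Pi.single i a := by
    intro x hx
    simp only [B, Finset.mem_biUnion, Finset.mem_image] at hx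
    obtain ⟨i, -, a, ha, rfl⟩ := hx
    exact ⟨i, a, ha, rfl⟩
  refine ⟨A ∪ B, ?_, ?_⟩
  · intro x hx y hy hne
    refine ⟨hne, funext fun i => ?_⟩
    simp only [Finset.coe_union, Set.mem_union, Finset.mem_coe, Finset.mem_union] at hx hy
    show x i * y i = 0
    rcases hx with hx | hx
    · rw [Fintype.mem_piFinset] at hx
      rcases hy with hy | hy
      · rw [Fintype.mem_piFinset] at hy
        exact mulN i _ _ (hx i) (hy i)
      · obtain ⟨j, a, ha, rfl⟩ := hB y hy
        rcases eq_or_ne i j with rfl | hij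
        · rw [Pi.single_eq_same]; exact mulNM i _ _ (hx i) ha
        · rw [Pi.single_eq_of_ne hij, mul_zero]
    · obtain ⟨j, a, ha, rfl⟩ := hB x hx
      rcases hy with hy | hy
      · rw [Fintype.mem_piFinset] at hy
        rcases eq_or_ne i j with rfl | hij
        · rw [Pi.single_eq_same, mul_comm]; exact mulNM i _ _ (hy i) ha
        · rw [Pi.single_eq_of_ne hij, zero_mul]
      · obtain ⟨j', a', ha', rfl⟩ := hB y hy
        rcases eq_or_ne j j' with rfl | hjj
        · have hne' : a ≠ a' := by
            rintro rfl; exact hne rfl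
          rcases eq_or_ne i j with rfl | hij
          · rw [Pi.single_eq_same, Pi.single_eq_same]
            exact (hclique i (mem_Mfin.mp ha).1 (mem_Mfin.mp ha').1 hne').2
          · rw [Pi.single_eq_of_ne hij, zero_mul]
        · rcases eq_or_ne i j with rfl | hij
          · rw [Pi.single_eq_of_ne hjj, mul_zero]
          · rw [Pi.single_eq_of_ne hij, zero_mul]
  · have hMne : ∀ i (a : R i), a ∈ Mfin (S i) → a ≠ 0 := by
      rintro i a ha rfl
      exact (mem_Mfin.mp ha).2 (by simp)
    have hdisj : Disjoint A B := by
      rw [Finset.disjoint_right]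
      intro x hx hA
      obtain ⟨i, a, ha, rfl⟩ := hB x hx
      rw [Fintype.mem_piFinset] at hA
      have := hA i
      rw [Pi.single_eq_same] at this
      exact (mem_Mfin.mp ha).2 (mem_Nfin.mp this).2
    rw [Finset.card_union_of_disjoint hdisj]
    congr 1
    · simp [A]
    · rw [Finset.card_biUnion]
      · refine Finset.sum_congr rfl fun i _ => ?_
        apply Finset.card_image_of_injOn
        intro a _ b _ hab
        have := congrFun hab i
        simpa using this
      · intro i _ j _ hij
        simp only [Finset.disjoint_left, Finset.mem_image]
        rintro x ⟨a, ha, rfl⟩ ⟨b, hb, hab⟩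
        have := congrFun hab i
        rw [Pi.single_eq_of_ne hij, Pi.single_eq_same] at this
        exact hMne i a ha this.symm

end prod

theorem stmt11 (k : ℕ) (R : Fin k → Type*) [∀ i, CommRing (R i)]
    (hchi : ∀ i, (gammaZero (R i)).chromaticNumber < ⊤)
    (S : ∀ i, Finset (R i))
    (hclique : ∀ i, (gammaZero (R i)).IsClique ((S i : Set (R i))))
    (hmaxcl : ∀ i, ∀ t : Set (R i), (gammaZero (R i)).IsClique t →
      (S i : Set (R i)) ⊆ t → t = (S i : Set (R i)))
    (hout : ∀ i, ∀ a b : R i, a ∉ S i → b ∉ S i → a * b ≠ 0) :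
    (gammaZero (∀ i, R i)).chromaticNumber = cliqueNumE (gammaZero (∀ i, R i)) ∧
    cliqueNumE (gammaZero (∀ i, R i)) =
      ((∏ i, {a ∈ (S i : Set (R i)) | a ^ 2 = 0}.ncard
        + ∑ i, ((S i).card - {a ∈ (S i : Set (R i)) | a ^ 2 = 0}.ncard) : ℕ) : ℕ∞) := by
  classical
  have hz : ∀ i, (0 : R i) ∈ S i := fun i => zero_mem_S (hclique i) (hmaxcl i)
  have hmax : ∀ i (a : R i), a ∉ S i → ∃ b ∈ S i, a * b ≠ 0 :=
    fun i a ha => exists_mul_ne_zero (hclique i) (hmaxcl i) a ha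
  set G := gammaZero (∀ i, R i) with hG
  set Bn : ℕ := ∏ i, (Nfin (S i)).card + ∑ i, (Mfin (S i)).card with hBn
  have hcol : G.Colorable Bn := colorable_bound S hz hmax hout
  obtain ⟨K, hK, hKcard⟩ := big_clique S hclique
  have h1 : G.chromaticNumber ≤ (Bn : ℕ∞) := hcol.chromaticNumber_le
  have h2 : (Bn : ℕ∞) ≤ cliqueNumE G := by
    rw [hBn, ← hKcard]
    exact le_iSup₂_of_le K hK le_rfl
  have h3 : cliqueNumE G ≤ G.chromaticNumber := by
    rw [cliqueNumE]
    exact iSup₂_le fun s hs => hs.card_le_chromaticNumber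
  have hchrom : G.chromaticNumber = (Bn : ℕ∞) := le_antisymm h1 ((h2.trans h3))
  have homega : cliqueNumE G = (Bn : ℕ∞) :=
    le_antisymm (h3.trans h1) h2
  have hncard : ∀ i, {a ∈ (S i : Set (R i)) | a ^ 2 = 0}.ncard = (Nfin (S i)).card := by
    intro i
    have hset : {a ∈ (S i : Set (R i)) | a ^ 2 = 0} = ((Nfin (S i) : Finset (R i)) : Set (R i)) := by
      ext a
      simp [mem_Nfin, Set.mem_setOf_eq]
    rw [hset, Set.ncard_coe_finset]
  have hform : Bn = ∏ i, {a ∈ (S i : Set (R i)) | a ^ 2 = 0}.ncard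
      + ∑ i, ((S i).card - {a ∈ (S i : Set (R i)) | a ^ 2 = 0}.ncard) := by
    rw [hBn]

    congr 1
    · exact Finset.prod_congr rfl fun i _ => (hncard i).symm
    · refine Finset.sum_congr rfl fun i _ => ?_
      rw [hncard i, card_Mfin]
  refine ⟨hchrom.trans homega.symm, ?_⟩
  rw [homega, hform]
end

section
/- Let n ≥ 0 and k ≥ 0 with n + k ≥ 1, let p₁, …, p_k be prime numbers and r₁, …, r_k positive integers, and let R = ℤⁿ × (Z/p₁^{r₁}) × ⋯ × (Z/p_k^{r_k}). Then χ(Γ₀(R)) = ω(Γ₀(R)) = ∏_{i=1}^k p_i^{⌊r_i/2⌋} + t + n, where t is the number of indices i with r_i odd and ⌊x⌋ denotes the floor function. -/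
section Single
variable {p r : ℕ}

lemma zmod_mul_eq_zero_iff (hp : p.Prime) (a b : ZMod (p ^ r)) :
    a * b = 0 ↔ p ^ r ∣ a.val * b.val := by
  haveI : NeZero (p ^ r) := ⟨pow_ne_zero _ hp.pos.ne'⟩
  have h : ((a.val * b.val : ℕ) : ZMod (p ^ r)) = a * b := by
    rw [Nat.cast_mul, ZMod.natCast_zmod_val, ZMod.natCast_zmod_val]
  rw [← h, ZMod.natCast_eq_zero_iff]

lemma not_dvd_of_dvd_mul (hp : p.Prime) {a b la lb : ℕ} (ha : ¬ p ^ la ∣ a)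
    (hb : ¬ p ^ lb ∣ b) (h : p ^ r ∣ a * b) (hlr : la + lb ≤ r + 1) : False := by
  have ha0 : a ≠ 0 := fun h0 => ha (h0 ▸ dvd_zero _)
  have hb0 : b ≠ 0 := fun h0 => hb (h0 ▸ dvd_zero _)
  have hfa : a.factorization p < la := by
    by_contra hle; push_neg at hle
    exact ha ((Nat.Prime.pow_dvd_iff_le_factorization hp ha0).2 hle)
  have hfb : b.factorization p < lb := by
    by_contra hle; push_neg at hle
    exact hb ((Nat.Prime.pow_dvd_iff_le_factorization hp hb0).2 hle)
  have hr' : r ≤ ((a * b).factorization) p :=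
    (Nat.Prime.pow_dvd_iff_le_factorization hp (mul_ne_zero ha0 hb0)).1 h
  rw [Nat.factorization_mul ha0 hb0, Finsupp.add_apply] at hr'
  omega

lemma key_odd (hp : p.Prime) (ho : Odd r) (a b : ZMod (p ^ r))
    (ha1 : ¬ p ^ (r / 2 + 1) ∣ a.val) (hb1 : ¬ p ^ (r / 2 + 1) ∣ b.val) :
    a * b ≠ 0 := by
  intro h
  rw [Nat.odd_iff] at ho
  exact not_dvd_of_dvd_mul hp ha1 hb1 ((zmod_mul_eq_zero_iff hp _ _).1 h) (by omega)

lemma key_color (hp : p.Prime) (hr : 0 < r) (a b : ZMod (p ^ r))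
    (hab : a * b = 0)
    (hna : ¬(Odd (r) ∧ p ^ (r / 2) ∣ a.val ∧ ¬ p ^ (r / 2 + 1) ∣ a.val))
    (hnb : ¬(Odd (r) ∧ p ^ (r / 2) ∣ b.val ∧ ¬ p ^ (r / 2 + 1) ∣ b.val))
    (hcol : (if p ^ (r - r / 2) ∣ a.val
        then ((a.val / p ^ (r - r / 2) : ℕ) : ZMod (p ^ (r / 2))) else 1)
      = (if p ^ (r - r / 2) ∣ b.val
        then ((b.val / p ^ (r - r / 2) : ℕ) : ZMod (p ^ (r / 2))) else 1)) :
    a = b := by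
  haveI : NeZero (p ^ r) := ⟨pow_ne_zero _ hp.pos.ne'⟩
  haveI : NeZero (p ^ (r / 2)) := ⟨pow_ne_zero _ hp.pos.ne'⟩
  have hd : p ^ r ∣ a.val * b.val := (zmod_mul_eq_zero_iff hp _ _).1 hab
  have hpow : p ^ (r - r / 2) * p ^ (r / 2) = p ^ r := by
    rw [← pow_add]; congr 1; omega
  have step : ∀ v : ℕ, ¬ p ^ (r - r / 2) ∣ v →
      ¬(Odd r ∧ p ^ (r / 2) ∣ v ∧ ¬ p ^ (r / 2 + 1) ∣ v) → ¬ p ^ (r / 2) ∣ v := by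
    intro v hv hno
    rcases Nat.even_or_odd r with he | ho
    · have hme : r - r / 2 = r / 2 := by rw [Nat.even_iff] at he; omega
      rwa [← hme]
    · have hm' : r - r / 2 = r / 2 + 1 := by rw [Nat.odd_iff] at ho; omega
      intro hlv
      exact hno ⟨ho, hlv, by rwa [← hm']⟩
  have hdivlt : ∀ v : ZMod (p ^ r), v.val / p ^ (r - r / 2) < p ^ (r / 2) := by
    intro v
    apply Nat.div_lt_of_lt_mul
    rw [hpow]; exact v.val_lt
  by_cases ha : p ^ (r - r / 2) ∣ a.val <;> by_cases hb : p ^ (r - r / 2) ∣ b.val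
  · rw [if_pos ha, if_pos hb] at hcol
    have h2 := congrArg ZMod.val hcol
    rw [ZMod.val_cast_of_lt (hdivlt a), ZMod.val_cast_of_lt (hdivlt b)] at h2
    apply ZMod.val_injective
    calc a.val = p ^ (r - r / 2) * (a.val / p ^ (r - r / 2)) := (Nat.mul_div_cancel' ha).symm
      _ = p ^ (r - r / 2) * (b.val / p ^ (r - r / 2)) := by rw [h2]
      _ = b.val := Nat.mul_div_cancel' hb
  · exfalso
    have hlb := step b.val hb hnb
    have hl0 : r / 2 ≠ 0 := fun h0 => hlb (by simp [h0])
    rw [if_pos ha, if_neg hb] at hcol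
    have h2 := congrArg ZMod.val hcol
    rw [ZMod.val_cast_of_lt (hdivlt a), ZMod.val_one_eq_one_mod] at h2
    rw [Nat.mod_eq_of_lt (Nat.one_lt_pow hl0 hp.one_lt)] at h2
    have hav : a.val = p ^ (r - r / 2) := by
      rw [← Nat.mul_div_cancel' ha, h2, mul_one]
    have hf : ¬ p ^ (r - r / 2 + 1) ∣ p ^ (r - r / 2) := by
      rw [Nat.pow_dvd_pow_iff_le_right hp.one_lt]; omega
    exact not_dvd_of_dvd_mul hp hf hlb (hav ▸ hd) (by omega)
  · exfalso
    have hla := step a.val ha hna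
    have hl0 : r / 2 ≠ 0 := fun h0 => hla (by simp [h0])
    rw [if_neg ha, if_pos hb] at hcol
    have h2 := congrArg ZMod.val hcol.symm
    rw [ZMod.val_cast_of_lt (hdivlt b), ZMod.val_one_eq_one_mod] at h2
    rw [Nat.mod_eq_of_lt (Nat.one_lt_pow hl0 hp.one_lt)] at h2
    have hbv : b.val = p ^ (r - r / 2) := by
      rw [← Nat.mul_div_cancel' hb, h2, mul_one]
    have hf : ¬ p ^ (r - r / 2 + 1) ∣ p ^ (r - r / 2) := by
      rw [Nat.pow_dvd_pow_iff_le_right hp.one_lt]; omega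
    exact not_dvd_of_dvd_mul hp hla hf (hbv ▸ hd) (by omega)
  · exfalso
    exact not_dvd_of_dvd_mul hp (step a.val ha hna) (step b.val hb hnb) hd (by omega)

lemma clique_mul₁ (hp : p.Prime) (s t : ℕ) :
    ((p ^ (r - r / 2) * s : ℕ) : ZMod (p ^ r)) * ((p ^ (r - r / 2) * t : ℕ) : ZMod (p ^ r)) = 0 := by
  rw [← Nat.cast_mul, ZMod.natCast_eq_zero_iff]
  calc p ^ r ∣ p ^ (r - r / 2) * p ^ (r - r / 2) := by
        rw [← pow_add]; exact pow_dvd_pow p (by omega)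
    _ ∣ p ^ (r - r / 2) * s * (p ^ (r - r / 2) * t) := by
        rw [mul_mul_mul_comm]; exact dvd_mul_right _ _

lemma clique_mul₂ (hp : p.Prime) (s : ℕ) :
    ((p ^ (r - r / 2) * s : ℕ) : ZMod (p ^ r)) * ((p ^ (r / 2) : ℕ) : ZMod (p ^ r)) = 0 := by
  rw [← Nat.cast_mul, ZMod.natCast_eq_zero_iff]
  calc p ^ r ∣ p ^ (r - r / 2) * p ^ (r / 2) := by
        rw [← pow_add]; exact pow_dvd_pow p (by omega)
    _ ∣ p ^ (r - r / 2) * s * p ^ (r / 2) := by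
        rw [mul_right_comm]; exact dvd_mul_right _ _

lemma clique_inj₁ (hp : p.Prime) {a b : ZMod (p ^ (r / 2))}
    (h : ((p ^ (r - r / 2) * a.val : ℕ) : ZMod (p ^ r))
       = ((p ^ (r - r / 2) * b.val : ℕ) : ZMod (p ^ r))) : a = b := by
  haveI : NeZero (p ^ (r / 2)) := ⟨pow_ne_zero _ hp.pos.ne'⟩
  rw [ZMod.natCast_eq_natCast_iff] at h
  have hpow : p ^ r = p ^ (r - r / 2) * p ^ (r / 2) := by rw [← pow_add]; congr 1; omega
  rw [hpow] at h
  have h2 := Nat.ModEq.mul_left_cancel' (pow_ne_zero _ hp.pos.ne') h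
  apply ZMod.val_injective
  have h3 : a.val % p ^ (r / 2) = b.val % p ^ (r / 2) := h2
  rwa [Nat.mod_eq_of_lt a.val_lt, Nat.mod_eq_of_lt b.val_lt] at h3

lemma mid_ne_zero (hp : p.Prime) (hr : 0 < r) : ((p ^ (r / 2) : ℕ) : ZMod (p ^ r)) ≠ 0 := by
  rw [Ne, ZMod.natCast_eq_zero_iff, Nat.pow_dvd_pow_iff_le_right hp.one_lt]
  omega

lemma clique_ne_mid (hp : p.Prime) (ho : Odd r) (s : ℕ) :
    ((p ^ (r - r / 2) * s : ℕ) : ZMod (p ^ r)) ≠ ((p ^ (r / 2) : ℕ) : ZMod (p ^ r)) := by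
  rw [Nat.odd_iff] at ho
  intro h
  rw [ZMod.natCast_eq_natCast_iff] at h
  have h2 : p ^ (r / 2 + 1) ∣ p ^ r := pow_dvd_pow p (by omega)
  have h3 := (Nat.ModEq.of_dvd h2 h)
  have h4 : p ^ (r / 2 + 1) ∣ p ^ (r - r / 2) * s :=
    dvd_mul_of_dvd_left (pow_dvd_pow p (by omega)) s
  have h5 : p ^ (r / 2) ≡ 0 [MOD p ^ (r / 2 + 1)] :=
    h3.symm.trans (Nat.modEq_zero_iff_dvd.2 h4)
  have h6 := Nat.modEq_zero_iff_dvd.1 h5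
  rw [Nat.pow_dvd_pow_iff_le_right hp.one_lt] at h6
  omega

end Single

section Glob
variable (n k : ℕ) (p r : Fin k → ℕ)

abbrev BeckC := (∀ i, ZMod (p i ^ (r i / 2))) ⊕ {i : Fin k // Odd (r i)} ⊕ Fin n

def cliqueMap : BeckC n k p r → (Fin n → ℤ) × ∀ i, ZMod (p i ^ r i) := fun c =>
  match c with
  | .inl a => (0, fun i => ((p i ^ (r i - r i / 2) * (a i).val : ℕ) : ZMod (p i ^ r i)))
  | .inr (.inl i) => (0, Pi.single i.1 ((p i.1 ^ (r i.1 / 2) : ℕ) : ZMod (p i.1 ^ r i.1)))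
  | .inr (.inr j) => (Pi.single j 1, 0)

open Classical in
noncomputable def beckColor : ((Fin n → ℤ) × ∀ i, ZMod (p i ^ r i)) → BeckC n k p r := fun x =>
  if hz : ∃ j, x.1 j ≠ 0 then .inr (.inr hz.choose)
  else if h3 : ∃ i, Odd (r i) ∧ p i ^ (r i / 2) ∣ (x.2 i).val ∧ ¬ p i ^ (r i / 2 + 1) ∣ (x.2 i).val
    then .inr (.inl ⟨h3.choose, h3.choose_spec.1⟩)
  else .inl fun i => if p i ^ (r i - r i / 2) ∣ (x.2 i).val
    then (((x.2 i).val / p i ^ (r i - r i / 2) : ℕ) : ZMod (p i ^ (r i / 2))) else 1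

variable {n k p r}

lemma cliqueMap_mul (hp : ∀ i, (p i).Prime) (hr : ∀ i, 0 < r i) :
    ∀ c d : BeckC n k p r, c ≠ d → cliqueMap n k p r c * cliqueMap n k p r d = 0 := by
  rintro (a | ⟨i, hi⟩ | j) (b | ⟨i', hi'⟩ | j') hcd
  · refine Prod.ext (by simp [cliqueMap]) ?_
    simp only [cliqueMap, Prod.snd_mul, Prod.snd_zero]
    funext jj
    rw [Pi.mul_apply, Pi.zero_apply]
    exact clique_mul₁ (hp jj) _ _
  · refine Prod.ext (by simp [cliqueMap]) ?_
    simp only [cliqueMap, Prod.snd_mul, Prod.snd_zero]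
    funext jj
    rw [Pi.mul_apply, Pi.zero_apply]
    rcases eq_or_ne jj i' with rfl | hne
    · rw [Pi.single_eq_same]; exact clique_mul₂ (hp jj) _
    · rw [Pi.single_eq_of_ne hne, mul_zero]
  · refine Prod.ext (by simp [cliqueMap]) (by simp [cliqueMap])
  · refine Prod.ext (by simp [cliqueMap]) ?_
    simp only [cliqueMap, Prod.snd_mul, Prod.snd_zero]
    funext jj
    rw [Pi.mul_apply, Pi.zero_apply]
    rcases eq_or_ne jj i with rfl | hne
    · rw [Pi.single_eq_same, mul_comm]; exact clique_mul₂ (hp jj) _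
    · rw [Pi.single_eq_of_ne hne, zero_mul]
  · refine Prod.ext (by simp [cliqueMap]) ?_
    simp only [cliqueMap, Prod.snd_mul, Prod.snd_zero]
    funext jj
    rw [Pi.mul_apply, Pi.zero_apply]
    have hii : i ≠ i' := fun h => hcd (by simp [h])
    rcases eq_or_ne jj i with rfl | hne
    · rw [Pi.single_eq_of_ne hii, mul_zero]
    · rw [Pi.single_eq_of_ne hne, zero_mul]
  · refine Prod.ext (by simp [cliqueMap]) (by simp [cliqueMap])
  · refine Prod.ext (by simp [cliqueMap]) (by simp [cliqueMap])
  · refine Prod.ext (by simp [cliqueMap]) (by simp [cliqueMap])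
  · refine Prod.ext ?_ (by simp [cliqueMap])
    simp only [cliqueMap, Prod.fst_mul, Prod.fst_zero]
    funext jj
    rw [Pi.mul_apply, Pi.zero_apply]
    have hjj : j ≠ j' := fun h => hcd (by rw [h])
    rcases eq_or_ne jj j with rfl | hne
    · rw [Pi.single_eq_of_ne hjj, mul_zero]
    · rw [Pi.single_eq_of_ne hne, zero_mul]

lemma cliqueMap_inj (hp : ∀ i, (p i).Prime) (hr : ∀ i, 0 < r i) :
    Function.Injective (cliqueMap n k p r) := by
  rintro (a | ⟨i, hi⟩ | j) (b | ⟨i', hi'⟩ | j') h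
  · refine congrArg Sum.inl (funext fun i => ?_)
    have h2 := congrFun (congrArg Prod.snd h) i
    simp only [cliqueMap] at h2
    exact clique_inj₁ (hp i) h2
  · exfalso
    have h2 := congrFun (congrArg Prod.snd h) i'
    simp only [cliqueMap] at h2
    rw [Pi.single_eq_same] at h2
    exact clique_ne_mid (hp i') hi' _ h2
  · exfalso
    have h2 := congrFun (congrArg Prod.fst h) j'
    simp only [cliqueMap, Pi.zero_apply, Pi.single_eq_same] at h2
    exact zero_ne_one h2
  · exfalso
    have h2 := congrFun (congrArg Prod.snd h) i
    simp only [cliqueMap] at h2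
    rw [Pi.single_eq_same] at h2
    exact clique_ne_mid (hp i) hi _ h2.symm
  · rcases eq_or_ne i i' with rfl | hii
    · rfl
    · exfalso
      have h2 := congrFun (congrArg Prod.snd h) i
      simp only [cliqueMap] at h2
      rw [Pi.single_eq_same, Pi.single_eq_of_ne hii] at h2
      exact mid_ne_zero (hp i) (hr i) h2
  · exfalso
    have h2 := congrFun (congrArg Prod.fst h) j'
    simp only [cliqueMap, Pi.zero_apply, Pi.single_eq_same] at h2
    exact zero_ne_one h2
  · exfalso
    have h2 := congrFun (congrArg Prod.fst h) j
    simp only [cliqueMap, Pi.zero_apply, Pi.single_eq_same] at h2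
    exact one_ne_zero h2
  · exfalso
    have h2 := congrFun (congrArg Prod.fst h) j
    simp only [cliqueMap, Pi.zero_apply, Pi.single_eq_same] at h2
    exact one_ne_zero h2
  · rcases eq_or_ne j j' with rfl | hjj
    · rfl
    · exfalso
      have h2 := congrFun (congrArg Prod.fst h) j
      simp only [cliqueMap] at h2
      rw [Pi.single_eq_same, Pi.single_eq_of_ne hjj] at h2
      exact one_ne_zero h2

lemma beckColor_valid (hp : ∀ i, (p i).Prime) (hr : ∀ i, 0 < r i) :
    ∀ {x y : (Fin n → ℤ) × ∀ i, ZMod (p i ^ r i)},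
      (gammaZero _).Adj x y → beckColor n k p r x ≠ beckColor n k p r y := by
  intro x y hadj hc
  obtain ⟨hne, hmul⟩ := hadj
  have hcoord : ∀ i, x.2 i * y.2 i = 0 := fun i => by
    have := congrArg (fun t => t.2 i) hmul; simpa using this
  have hzc : ∀ j, x.1 j * y.1 j = 0 := fun j => by
    have := congrArg (fun t => t.1 j) hmul; simpa using this
  unfold beckColor at hc
  by_cases hzx : ∃ j, x.1 j ≠ 0 <;> by_cases hzy : ∃ j, y.1 j ≠ 0
  · rw [dif_pos hzx, dif_pos hzy] at hc
    simp only [Sum.inr.injEq] at hc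
    have h1 := hzx.choose_spec
    have h2 := hzy.choose_spec
    rw [hc] at h1
    exact mul_ne_zero h1 h2 (hzc _)
  · rw [dif_pos hzx, dif_neg hzy] at hc
    split_ifs at hc <;> simp at hc
  · rw [dif_neg hzx, dif_pos hzy] at hc
    split_ifs at hc <;> simp at hc
  · rw [dif_neg hzx, dif_neg hzy] at hc
    have hx1 : x.1 = 0 := funext fun j => by
      by_contra hj; exact hzx ⟨j, hj⟩
    have hy1 : y.1 = 0 := funext fun j => by
      by_contra hj; exact hzy ⟨j, hj⟩
    by_cases h3x : ∃ i, Odd (r i) ∧ p i ^ (r i / 2) ∣ (x.2 i).val ∧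
        ¬ p i ^ (r i / 2 + 1) ∣ (x.2 i).val <;>
      by_cases h3y : ∃ i, Odd (r i) ∧ p i ^ (r i / 2) ∣ (y.2 i).val ∧
        ¬ p i ^ (r i / 2 + 1) ∣ (y.2 i).val
    · rw [dif_pos h3x, dif_pos h3y] at hc
      simp only [Sum.inr.injEq, Sum.inl.injEq, Subtype.mk.injEq] at hc
      obtain ⟨ho, hdx, hndx⟩ := h3x.choose_spec
      obtain ⟨ho', hdy, hndy⟩ := h3y.choose_spec
      rw [hc] at hndx
      exact key_odd (hp _) ho' (x.2 _) (y.2 _) hndx hndy (hcoord _)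
    · rw [dif_pos h3x, dif_neg h3y] at hc; simp at hc
    · rw [dif_neg h3x, dif_pos h3y] at hc; simp at hc
    · rw [dif_neg h3x, dif_neg h3y] at hc
      simp only [Sum.inl.injEq] at hc
      apply hne
      refine Prod.ext (hx1.trans hy1.symm) (funext fun i => ?_)
      exact key_color (hp i) (hr i) _ _ (hcoord i) (not_exists.mp h3x i)
        (not_exists.mp h3y i) (congrFun hc i)

end Glob

theorem stmt12 (n k : ℕ) (hnk : 1 ≤ n + k) (p r : Fin k → ℕ)
    (hp : ∀ i, (p i).Prime) (hr : ∀ i, 0 < r i) :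
    (gammaZero ((Fin n → ℤ) × ∀ i, ZMod (p i ^ r i))).chromaticNumber =
      cliqueNumE (gammaZero ((Fin n → ℤ) × ∀ i, ZMod (p i ^ r i))) ∧
    cliqueNumE (gammaZero ((Fin n → ℤ) × ∀ i, ZMod (p i ^ r i))) =
      ((∏ i, p i ^ (r i / 2) + (Finset.univ.filter fun i => Odd (r i)).card + n : ℕ) : ℕ∞) := by
  classical
  haveI : ∀ i, NeZero (p i ^ r i) := fun i => ⟨pow_ne_zero _ (hp i).pos.ne'⟩
  haveI : ∀ i, NeZero (p i ^ (r i / 2)) := fun i => ⟨pow_ne_zero _ (hp i).pos.ne'⟩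
  set G := gammaZero ((Fin n → ℤ) × ∀ i, ZMod (p i ^ r i)) with hG
  set c : ℕ := ∏ i, p i ^ (r i / 2) + (Finset.univ.filter fun i => Odd (r i)).card + n
    with hc
  have hcard : Fintype.card (BeckC n k p r) = c := by
    rw [hc]
    simp only [Fintype.card_sum, Fintype.card_pi, ZMod.card, Fintype.card_subtype,
      Fintype.card_fin, add_assoc]
  -- colorable
  have hcolor : G.Colorable c := by
    rw [← hcard]
    exact (SimpleGraph.Coloring.mk (beckColor n k p r)
      (fun hadj => beckColor_valid hp hr hadj)).colorable
  -- the clique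
  set s : Finset ((Fin n → ℤ) × ∀ i, ZMod (p i ^ r i)) :=
    Finset.univ.image (cliqueMap n k p r) with hs
  have hscard : s.card = c := by
    rw [hs, Finset.card_image_of_injective _ (cliqueMap_inj hp hr), Finset.card_univ, hcard]
  have hsclique : G.IsClique (s : Set _) := by
    intro x hx y hy hxy
    rw [Finset.mem_coe, hs, Finset.mem_image] at hx hy
    obtain ⟨cx, -, rfl⟩ := hx
    obtain ⟨cy, -, rfl⟩ := hy
    exact ⟨hxy, cliqueMap_mul hp hr cx cy (fun h => hxy (by rw [h]))⟩
  have h1 : (c : ℕ∞) ≤ cliqueNumE G := by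
    unfold cliqueNumE
    exact le_iSup_of_le s (le_iSup_of_le hsclique (by rw [hscard]))
  have h2 : cliqueNumE G ≤ (c : ℕ∞) := by
    unfold cliqueNumE
    exact iSup₂_le fun t ht => Nat.cast_le.mpr (ht.card_le_of_colorable hcolor)
  have h3 : G.chromaticNumber ≤ (c : ℕ∞) := hcolor.chromaticNumber_le
  have h4 : (c : ℕ∞) ≤ G.chromaticNumber := by
    calc (c : ℕ∞) = (s.card : ℕ∞) := by rw [hscard]
      _ ≤ G.chromaticNumber := hsclique.card_le_chromaticNumber
  exact ⟨le_antisymm (h3.trans h1) (h2.trans h4), le_antisymm h2 h1⟩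
end

section
/- Let p be a prime number and r an odd integer with r ≥ 3, and let R = Z/p^r. Then χ(complement of Γ(R)) = ω(complement of Γ(R)) = p^{r−1} − p^{(r−1)/2}. -/
/-- The set `Z(R) \ {0}` of nonzero zero-divisors of `R`. -/
def zdStar (R : Type*) [CommRing R] : Set R :=
  {x | x ≠ 0 ∧ ∃ y, y ≠ 0 ∧ x * y = 0}

/-- The Anderson–Livingston zero-divisor graph `Γ(R)`: vertices are the nonzero
zero-divisors of `R`, and two distinct vertices `x`, `y` are adjacent iff `x * y = 0`.
It is the subgraph of `Γ₀(R)` induced on `Z(R) \ {0}`. -/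
def gammaGraph (R : Type*) [CommRing R] : SimpleGraph (zdStar R) :=
  (gammaZero R).induce (zdStar R)

section aux

lemma aux_v_le {p r : ℕ} (hp : p.Prime) {m : ℕ} (hm : m ≠ 0) (hlt : m < p ^ r) :
    m.factorization p ≤ r - 1 := by
  have h1 : p ^ (m.factorization p) ∣ m := Nat.ordProj_dvd m p
  have h2 : p ^ (m.factorization p) ≤ m := Nat.le_of_dvd (Nat.pos_of_ne_zero hm) h1
  have h3 : p ^ (m.factorization p) < p ^ r := lt_of_le_of_lt h2 hlt
  have := (Nat.pow_lt_pow_iff_right hp.one_lt).mp h3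
  omega

lemma aux_mul_eq_zero {p r : ℕ} (hp : p.Prime) [NeZero (p ^ r)]
    (x y : ZMod (p ^ r)) (hx : x ≠ 0) (hy : y ≠ 0) :
    x * y = 0 ↔ r ≤ x.val.factorization p + y.val.factorization p := by
  have hxv : x.val ≠ 0 := fun h => hx (by rwa [← ZMod.val_eq_zero])
  have hyv : y.val ≠ 0 := fun h => hy (by rwa [← ZMod.val_eq_zero])
  have h1 : x * y = 0 ↔ p ^ r ∣ x.val * y.val := by
    rw [← ZMod.natCast_eq_zero_iff, Nat.cast_mul, ZMod.natCast_val,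
      ZMod.natCast_val, ZMod.cast_id, ZMod.cast_id]
  rw [h1, Nat.Prime.pow_dvd_iff_le_factorization hp (Nat.mul_ne_zero hxv hyv),
    Nat.factorization_mul hxv hyv]
  rfl

lemma aux_pow_ne_zero {p r j : ℕ} (hp : p.Prime) [NeZero (p ^ r)] (hj : j < r) :
    ((p ^ j : ℕ) : ZMod (p ^ r)) ≠ 0 ∧ ((p ^ j : ℕ) : ZMod (p ^ r)).val = p ^ j := by
  have hlt : p ^ j < p ^ r := Nat.pow_lt_pow_right hp.one_lt hj
  constructor
  · rw [Ne, ZMod.natCast_eq_zero_iff]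
    intro h
    exact absurd (Nat.le_of_dvd (pow_pos hp.pos j) h) (not_le.mpr hlt)
  · exact ZMod.val_cast_of_lt hlt

lemma aux_mem_zdStar {p r : ℕ} (hp : p.Prime) (hr : 1 ≤ r) [NeZero (p ^ r)]
    (x : ZMod (p ^ r)) :
    x ∈ zdStar (ZMod (p ^ r)) ↔ x ≠ 0 ∧ p ∣ x.val := by
  constructor
  · rintro ⟨hx0, y, hy0, hxy⟩
    refine ⟨hx0, ?_⟩
    rw [aux_mul_eq_zero hp x y hx0 hy0] at hxy
    have hyv : y.val ≠ 0 := fun h => hy0 (by rwa [← ZMod.val_eq_zero])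
    have h2 : y.val.factorization p ≤ r - 1 := aux_v_le hp hyv y.val_lt
    have hxv : x.val ≠ 0 := fun h => hx0 (by rwa [← ZMod.val_eq_zero])
    have h3 : p ^ 1 ∣ x.val :=
      (Nat.Prime.pow_dvd_iff_le_factorization hp hxv).mpr (by omega)
    simpa using h3
  · rintro ⟨hx0, hdvd⟩
    obtain ⟨hy0, hyval⟩ := aux_pow_ne_zero (r := r) (j := r - 1) hp (by omega)
    refine ⟨hx0, ((p ^ (r - 1) : ℕ) : ZMod (p ^ r)), hy0, ?_⟩
    rw [aux_mul_eq_zero hp _ _ hx0 hy0, hyval]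
    have hxv : x.val ≠ 0 := fun h => hx0 (by rwa [← ZMod.val_eq_zero])
    have h1 : 1 ≤ x.val.factorization p :=
      (Nat.Prime.pow_dvd_iff_le_factorization hp hxv).mp (by simpa using hdvd)
    have h2 : (p ^ (r - 1)).factorization p = r - 1 := by
      simp [Nat.Prime.factorization_pow hp]
    rw [h2]; omega

end aux

lemma aux_range_filter (d m : ℕ) (hd : 0 < d) :
    ((Finset.range (d * m)).filter (fun x => d ∣ x)).card = m := by
  have himg : (Finset.range (d * m)).filter (fun x => d ∣ x) =
      (Finset.range m).image (fun j => d * j) := by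
    ext x
    simp only [Finset.mem_filter, Finset.mem_range, Finset.mem_image]
    constructor
    · rintro ⟨hlt, j, rfl⟩
      exact ⟨j, Nat.lt_of_mul_lt_mul_left hlt, rfl⟩
    · rintro ⟨j, hj, rfl⟩
      exact ⟨(Nat.mul_lt_mul_left hd).mpr hj, j, rfl⟩
  rw [himg, Finset.card_image_of_injective _ (fun a b h => by
    exact Nat.eq_of_mul_eq_mul_left hd h), Finset.card_range]

lemma aux_count_dvd {n d : ℕ} [NeZero n] (hd : d ∣ n) :
    (Finset.univ.filter fun x : ZMod n => d ∣ x.val).card = n / d := by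
  have hd0 : 0 < d := Nat.pos_of_dvd_of_pos hd (Nat.pos_of_ne_zero (NeZero.ne n))
  obtain ⟨m, rfl⟩ := hd
  have key : (Finset.univ.filter fun x : ZMod (d * m) => d ∣ x.val).card =
      ((Finset.range (d * m)).filter (fun x => d ∣ x)).card := by
    apply Finset.card_bij (fun x _ => x.val)
    · intro x hx
      simp only [Finset.mem_filter, Finset.mem_range]
      exact ⟨x.val_lt, (Finset.mem_filter.mp hx).2⟩
    · intro a ha b hb h
      exact ZMod.val_injective _ h
    · intro b hb
      simp only [Finset.mem_filter, Finset.mem_range] at hb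
      refine ⟨(b : ZMod (d * m)), Finset.mem_filter.mpr ⟨Finset.mem_univ _, ?_⟩, ?_⟩
      · rw [ZMod.val_cast_of_lt hb.1]; exact hb.2
      · rw [ZMod.val_cast_of_lt hb.1]
  rw [key, aux_range_filter d m hd0, Nat.mul_div_cancel_left m hd0]

lemma gammaGraph_adj {R : Type*} [CommRing R] (x y : zdStar R) :
    (gammaGraph R).Adj x y ↔ (x : R) ≠ y ∧ (x : R) * y = 0 := Iff.rfl

lemma aux_count_Q {p r k : ℕ} (hp : p.Prime) [NeZero (p ^ r)] (hk : k + 1 ≤ r) :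
    (Finset.univ.filter fun x : ZMod (p ^ r) => p ∣ x.val ∧ ¬ p ^ (k + 1) ∣ x.val).card
      = p ^ (r - 1) - p ^ (r - (k + 1)) := by
  classical
  have hsub : (Finset.univ.filter fun x : ZMod (p ^ r) => p ∣ x.val ∧ ¬ p ^ (k + 1) ∣ x.val)
      = (Finset.univ.filter fun x : ZMod (p ^ r) => p ∣ x.val) \
        (Finset.univ.filter fun x : ZMod (p ^ r) => p ^ (k + 1) ∣ x.val) := by
    ext x
    simp only [Finset.mem_filter, Finset.mem_sdiff, Finset.mem_univ, true_and]
  have hss : (Finset.univ.filter fun x : ZMod (p ^ r) => p ^ (k + 1) ∣ x.val) ⊆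
      (Finset.univ.filter fun x : ZMod (p ^ r) => p ∣ x.val) := by
    intro x hx
    simp only [Finset.mem_filter, Finset.mem_univ, true_and] at hx ⊢
    exact dvd_trans (dvd_pow_self p (Nat.succ_ne_zero k)) hx
  have hd1 : p ∣ p ^ r := dvd_pow_self p (by omega : r ≠ 0)
  have hd2 : p ^ (k + 1) ∣ p ^ r := pow_dvd_pow p hk
  rw [hsub, Finset.card_sdiff_of_subset hss, aux_count_dvd hd1, aux_count_dvd hd2]
  have e1 : p ^ r / p = p ^ (r - 1) := by
    conv_lhs => rw [show p ^ r / p = p ^ r / p ^ 1 by rw [pow_one]]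
    exact Nat.pow_div (by omega) hp.pos
  have e2 : p ^ r / p ^ (k + 1) = p ^ (r - (k + 1)) := Nat.pow_div hk hp.pos
  rw [e1, e2]

theorem stmt15 (p r : ℕ) (hp : p.Prime) (hr : 3 ≤ r) (hro : Odd r) :
    ((gammaGraph (ZMod (p ^ r)))ᶜ).chromaticNumber =
      cliqueNumE ((gammaGraph (ZMod (p ^ r)))ᶜ) ∧
    cliqueNumE ((gammaGraph (ZMod (p ^ r)))ᶜ) =
      ((p ^ (r - 1) - p ^ ((r - 1) / 2) : ℕ) : ℕ∞) := by
  classical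
  haveI : NeZero (p ^ r) := ⟨pow_ne_zero r hp.pos.ne'⟩
  obtain ⟨k, hkr⟩ := hro
  have hk1 : 1 ≤ k := by omega
  have hk2 : (r - 1) / 2 = k := by omega
  have hkr' : k + 1 ≤ r := by omega
  set G := (gammaGraph (ZMod (p ^ r)))ᶜ with hG
  set N : ℕ := p ^ (r - 1) - p ^ k with hN
  -- the predicate for "low valuation" zero-divisors
  set Q : ZMod (p ^ r) → Prop := fun x => p ∣ x.val ∧ ¬ p ^ (k + 1) ∣ x.val with hQ
  -- basic facts
  have hvalne : ∀ x : ZMod (p ^ r), x ≠ 0 → x.val ≠ 0 := fun x hx h =>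
    hx (by rwa [← ZMod.val_eq_zero])
  have hQne : ∀ x : ZMod (p ^ r), Q x → x ≠ 0 := by
    intro x hx h
    exact hx.2 (h ▸ (by simp : (p:ℕ) ^ (k+1) ∣ (0 : ZMod (p ^ r)).val))
  have hQzd : ∀ x : ZMod (p ^ r), Q x → x ∈ zdStar (ZMod (p ^ r)) := fun x hx =>
    (aux_mem_zdStar hp (by omega) x).mpr ⟨hQne x hx, hx.1⟩
  -- valuation characterizations
  have hQv : ∀ x : ZMod (p ^ r), x ≠ 0 →
      (Q x ↔ 1 ≤ x.val.factorization p ∧ x.val.factorization p ≤ k) := by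
    intro x hx
    have hxv := hvalne x hx
    constructor
    · rintro ⟨h1, h2⟩
      refine ⟨(Nat.Prime.pow_dvd_iff_le_factorization hp hxv).mp (by simpa using h1), ?_⟩
      by_contra h
      exact h2 ((Nat.Prime.pow_dvd_iff_le_factorization hp hxv).mpr (by omega))
    · rintro ⟨h1, h2⟩
      refine ⟨by simpa using (Nat.Prime.pow_dvd_iff_le_factorization hp hxv).mpr h1, ?_⟩
      intro h
      have := (Nat.Prime.pow_dvd_iff_le_factorization hp hxv).mp h
      omega
  have hNQv : ∀ x : ZMod (p ^ r), x ∈ zdStar (ZMod (p ^ r)) → ¬ Q x →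
      k + 1 ≤ x.val.factorization p := by
    intro x hxz hnq
    have hx0 : x ≠ 0 := hxz.1
    have hdvd : p ∣ x.val := ((aux_mem_zdStar hp (by omega) x).mp hxz).2
    have hv1 : 1 ≤ x.val.factorization p :=
      (Nat.Prime.pow_dvd_iff_le_factorization hp (hvalne x hx0)).mp (by simpa using hdvd)
    rw [hQv x hx0] at hnq
    omega
  -- the finset S of low-valuation zero-divisors
  haveI : Fintype (zdStar (ZMod (p ^ r))) := Fintype.ofFinite _
  set S : Finset (zdStar (ZMod (p ^ r))) := Finset.univ.filter (fun x => Q x.1) with hS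
  -- cardinality of S
  have hScard : S.card = N := by
    have : S.card = (Finset.univ.filter fun x : ZMod (p ^ r) =>
        p ∣ x.val ∧ ¬ p ^ (k + 1) ∣ x.val).card := by
      apply Finset.card_bij (fun x _ => x.1)
      · intro x hx
        exact Finset.mem_filter.mpr ⟨Finset.mem_univ _, (Finset.mem_filter.mp hx).2⟩
      · intro a _ b _ h
        exact Subtype.ext h
      · intro b hb
        have hQb := (Finset.mem_filter.mp hb).2
        exact ⟨⟨b, hQzd b hQb⟩, Finset.mem_filter.mpr ⟨Finset.mem_univ _, hQb⟩, rfl⟩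
    rw [this, aux_count_Q (r := r) (k := k) hp hkr']
    have hrk : r - (k + 1) = k := by omega
    rw [hrk]
  -- S is a clique in the complement
  have hclique : G.IsClique (S : Set _) := by
    intro x hx y hy hne
    have hqx : Q x.1 := (Finset.mem_filter.mp (Finset.mem_coe.mp hx)).2
    have hqy : Q y.1 := (Finset.mem_filter.mp (Finset.mem_coe.mp hy)).2
    rw [hG, SimpleGraph.compl_adj]
    refine ⟨hne, ?_⟩
    rw [gammaGraph_adj]
    rintro ⟨hne', hmul⟩
    have hx0 : (x : ZMod (p ^ r)) ≠ 0 := x.2.1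
    have hy0 : (y : ZMod (p ^ r)) ≠ 0 := y.2.1
    rw [aux_mul_eq_zero hp _ _ hx0 hy0] at hmul
    have h1 := (hQv _ hx0).mp hqx
    have h2 := (hQv _ hy0).mp hqy
    omega
  -- the coloring
  have hpk : ((p ^ k : ℕ) : ZMod (p ^ r)) ≠ 0 ∧ ((p ^ k : ℕ) : ZMod (p ^ r)).val = p ^ k :=
    aux_pow_ne_zero hp (by omega)
  have hpkQ : Q ((p ^ k : ℕ) : ZMod (p ^ r)) := by
    constructor
    · rw [hpk.2]; exact dvd_pow_self p (by omega)
    · rw [hpk.2]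
      intro h
      exact absurd ((Nat.pow_dvd_pow_iff_le_right hp.one_lt).mp h) (by omega)
  have hpkv : ((p ^ k : ℕ) : ZMod (p ^ r)).val.factorization p = k := by
    rw [hpk.2]
    simp [Nat.Prime.factorization_pow hp]
  set el : {y : zdStar (ZMod (p ^ r)) // Q y.1} :=
    ⟨⟨((p ^ k : ℕ) : ZMod (p ^ r)), hQzd _ hpkQ⟩, hpkQ⟩ with hel
  have hcolor : G.Colorable (Fintype.card {y : zdStar (ZMod (p ^ r)) // Q y.1}) := by
    refine (SimpleGraph.Coloring.mk (fun x => if h : Q x.1 then ⟨x, h⟩ else el) ?_).colorable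
    intro x y hadj heq
    rw [hG, SimpleGraph.compl_adj] at hadj
    obtain ⟨hne, hnadj⟩ := hadj
    have hne' : (x : ZMod (p ^ r)) ≠ y := fun h => hne (Subtype.ext h)
    have hmulne : (x : ZMod (p ^ r)) * y ≠ 0 := fun h => hnadj ((gammaGraph_adj x y).mpr ⟨hne', h⟩)
    have hx0 : (x : ZMod (p ^ r)) ≠ 0 := x.2.1
    have hy0 : (y : ZMod (p ^ r)) ≠ 0 := y.2.1
    rw [Ne, aux_mul_eq_zero hp _ _ hx0 hy0] at hmulne
    replace heq : (if h : Q x.1 then (⟨x, h⟩ : {y : zdStar (ZMod (p ^ r)) // Q y.1}) else el)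
        = if h : Q y.1 then ⟨y, h⟩ else el := heq
    by_cases hqx : Q x.1 <;> by_cases hqy : Q y.1
    · rw [dif_pos hqx, dif_pos hqy] at heq
      exact hne (by simpa using heq)
    · rw [dif_pos hqx, dif_neg hqy] at heq
      have hxeq : (x : ZMod (p ^ r)) = ((p ^ k : ℕ) : ZMod (p ^ r)) := by
        have := congrArg (fun z => (z.1 : ZMod (p ^ r))) heq
        simpa [hel] using this
      have hvx : (x : ZMod (p ^ r)).val.factorization p = k := by rw [hxeq, hpkv]
      have hvy := hNQv _ y.2 hqy
      omega
    · rw [dif_neg hqx, dif_pos hqy] at heq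
      have hyeq : (y : ZMod (p ^ r)) = ((p ^ k : ℕ) : ZMod (p ^ r)) := by
        have := congrArg (fun z => (z.1 : ZMod (p ^ r))) heq
        simpa [hel] using this.symm
      have hvy : (y : ZMod (p ^ r)).val.factorization p = k := by rw [hyeq, hpkv]
      have hvx := hNQv _ x.2 hqx
      omega
    · have hvx := hNQv _ x.2 hqx
      have hvy := hNQv _ y.2 hqy
      omega
  have hcardty : Fintype.card {y : zdStar (ZMod (p ^ r)) // Q y.1} = N := by
    rw [Fintype.card_subtype, ← hS, hScard]
  rw [hcardty] at hcolor
  -- the three inequalities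
  have h1 : G.chromaticNumber ≤ (N : ℕ∞) := hcolor.chromaticNumber_le
  have h2 : (N : ℕ∞) ≤ cliqueNumE G := by
    have := le_iSup₂ (f := fun (s : Finset (zdStar (ZMod (p ^ r))))
      (_ : G.IsClique (s : Set _)) => (s.card : ℕ∞)) S hclique
    rw [hScard] at this
    exact this
  have h3 : cliqueNumE G ≤ G.chromaticNumber := by
    refine iSup₂_le fun s hs => ?_
    exact hs.card_le_chromaticNumber
  have hkey : G.chromaticNumber = (N : ℕ∞) ∧ cliqueNumE G = (N : ℕ∞) :=
    ⟨le_antisymm h1 (le_trans h2 h3), le_antisymm (le_trans h3 h1) h2⟩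
  rw [hk2]
  exact ⟨hkey.1.trans hkey.2.symm, hkey.2⟩
end

section
/- Let p₁, …, p_k be prime numbers, r₁, …, r_k positive integers with k ≥ 1, and R = (Z/p₁^{r₁}) × ⋯ × (Z/p_k^{r_k}). Then χ(complement of Γ(R)) = ω(complement of Γ(R)). -/
namespace ZD

set_option linter.unusedVariables false
set_option linter.unusedSectionVars false

/-- valuation of an element of `ZMod (p^e)` -/
def vv (p e : ℕ) (x : ZMod (p ^ e)) : ℕ := if x = 0 then e else (x.val).factorization p

section Coord
open Finset

variable {p e : ℕ}

lemma vv_zero : vv p e (0 : ZMod (p ^ e)) = e := by simp [vv]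

lemma neZero_pow (hp : p.Prime) : NeZero (p ^ e) := ⟨pow_ne_zero e hp.ne_zero⟩

lemma vv_lt (hp : p.Prime) (x : ZMod (p ^ e)) (hx : x ≠ 0) : vv p e x < e := by
  haveI := neZero_pow (e := e) hp
  have hval : x.val ≠ 0 := fun h => hx ((ZMod.val_eq_zero x).1 h)
  rw [vv, if_neg hx]
  by_contra h
  push_neg at h
  have hdvd : p ^ e ∣ x.val :=
    (Nat.Prime.pow_dvd_iff_le_factorization hp hval).2 h
  have := Nat.le_of_dvd (Nat.pos_of_ne_zero hval) hdvd
  exact absurd (ZMod.val_lt x) (by omega)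

lemma vv_le (hp : p.Prime) (x : ZMod (p ^ e)) : vv p e x ≤ e := by
  by_cases hx : x = 0
  · simp [hx, vv_zero]
  · exact (vv_lt hp x hx).le

lemma vv_eq_e_iff (hp : p.Prime) (x : ZMod (p ^ e)) : vv p e x = e ↔ x = 0 := by
  constructor
  · intro h
    by_contra hx
    exact absurd h (vv_lt hp x hx).ne
  · rintro rfl; exact vv_zero

lemma pow_dvd_val_iff (hp : p.Prime) (x : ZMod (p ^ e)) {t : ℕ} (ht : t ≤ e) :
    p ^ t ∣ x.val ↔ t ≤ vv p e x := by
  haveI := neZero_pow (e := e) hp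
  by_cases hx : x = 0
  · subst hx
    simp [ZMod.val_zero, vv_zero, ht]
  · have hval : x.val ≠ 0 := fun h => hx ((ZMod.val_eq_zero x).1 h)
    rw [vv, if_neg hx]
    exact Nat.Prime.pow_dvd_iff_le_factorization hp hval

lemma mul_eq_zero_iff (hp : p.Prime) (x y : ZMod (p ^ e)) :
    x * y = 0 ↔ e ≤ vv p e x + vv p e y := by
  haveI := neZero_pow (e := e) hp
  by_cases hx : x = 0
  · subst hx
    simp only [zero_mul, vv_zero, true_iff]
    omega
  by_cases hy : y = 0
  · subst hy
    simp only [mul_zero, vv_zero, true_iff]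
    have := vv_le hp x
    omega
  have hvx : x.val ≠ 0 := fun h => hx ((ZMod.val_eq_zero x).1 h)
  have hvy : y.val ≠ 0 := fun h => hy ((ZMod.val_eq_zero y).1 h)
  have hxy : x * y = ((x.val * y.val : ℕ) : ZMod (p ^ e)) := by
    push_cast
    rw [ZMod.natCast_val, ZMod.natCast_val, ZMod.cast_id, ZMod.cast_id]
  rw [hxy, ZMod.natCast_eq_zero_iff,
    Nat.Prime.pow_dvd_iff_le_factorization hp (Nat.mul_ne_zero hvx hvy),
    Nat.factorization_mul hvx hvy]
  simp only [Finsupp.add_apply]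
  rw [vv, if_neg hx, vv, if_neg hy]

lemma vv_pow_cast (hp : p.Prime) {t : ℕ} (ht : t ≤ e) :
    vv p e ((p ^ t : ℕ) : ZMod (p ^ e)) = t := by
  haveI := neZero_pow (e := e) hp
  rcases eq_or_lt_of_le ht with rfl | hlt
  · simp [vv_zero, ZMod.natCast_self, vv]
  · have hlt' : p ^ t < p ^ e := Nat.pow_lt_pow_right hp.one_lt hlt
    have hne : ((p ^ t : ℕ) : ZMod (p ^ e)) ≠ 0 := by
      rw [Ne, ZMod.natCast_eq_zero_iff]
      intro hdvd
      exact absurd (Nat.le_of_dvd (pow_pos hp.pos t) hdvd) (by omega)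
    rw [vv, if_neg hne, ZMod.val_cast_of_lt hlt', hp.factorization_pow, Finsupp.single_eq_same]


variable [NeZero (p ^ e)]

open Finset

lemma card_filter_le_vv (hp : p.Prime) {t : ℕ} (ht : t ≤ e) :
    (univ.filter fun x : ZMod (p ^ e) => t ≤ vv p e x).card = p ^ (e - t) := by
  rw [← Finset.card_range (p ^ (e - t))]
  apply Finset.card_bij' (fun x _ => x.val / p ^ t)
      (fun j _ => ((j * p ^ t : ℕ) : ZMod (p ^ e)))
  · intro x hx
    simp only [mem_filter, mem_univ, true_and] at hx
    have hdvd : p ^ t ∣ x.val := (pow_dvd_val_iff hp x ht).2 hx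
    have hlt : x.val < p ^ e := ZMod.val_lt x
    rw [mem_range]
    apply Nat.div_lt_of_lt_mul
    calc x.val < p ^ e := hlt
    _ = p ^ t * p ^ (e - t) := by rw [← pow_add]; congr 1; omega
  · intro j hj
    rw [mem_range] at hj
    have hlt : j * p ^ t < p ^ e := by
      calc j * p ^ t < p ^ (e - t) * p ^ t :=
        (Nat.mul_lt_mul_right (pow_pos hp.pos t)).2 hj
      _ = p ^ e := by rw [← pow_add]; congr 1; omega
    simp only [mem_filter, mem_univ, true_and]
    rw [← pow_dvd_val_iff hp _ ht, ZMod.val_cast_of_lt hlt]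
    exact dvd_mul_left (p ^ t) j
  · intro x hx
    simp only [mem_filter, mem_univ, true_and] at hx
    have hdvd : p ^ t ∣ x.val := (pow_dvd_val_iff hp x ht).2 hx
    rw [Nat.div_mul_cancel hdvd, ZMod.natCast_val, ZMod.cast_id]
  · intro j hj
    rw [mem_range] at hj
    have hlt : j * p ^ t < p ^ e := by
      calc j * p ^ t < p ^ (e - t) * p ^ t :=
        (Nat.mul_lt_mul_right (pow_pos hp.pos t)).2 hj
      _ = p ^ e := by rw [← pow_add]; congr 1; omega
    rw [ZMod.val_cast_of_lt hlt, Nat.mul_div_cancel _ (pow_pos hp.pos t)]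

lemma card_class (hp : p.Prime) {t : ℕ} (ht : t ≤ e) :
    (univ.filter fun x : ZMod (p ^ e) => vv p e x = t).card
      = Nat.totient (p ^ (e - t)) := by
  rcases eq_or_lt_of_le ht with rfl | hlt
  · have : (univ.filter fun x : ZMod (p ^ t) => vv p t x = t) = {0} := by
      ext x
      simp [vv_eq_e_iff hp]
    rw [this]
    simp
  · have hsplit : (univ.filter fun x : ZMod (p ^ e) => t ≤ vv p e x)
        = (univ.filter fun x : ZMod (p ^ e) => vv p e x = t)
          ∪ (univ.filter fun x : ZMod (p ^ e) => t + 1 ≤ vv p e x) := by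
      ext x
      simp only [mem_filter, mem_univ, true_and, mem_union]
      omega
    have hdisj : Disjoint (univ.filter fun x : ZMod (p ^ e) => vv p e x = t)
        (univ.filter fun x : ZMod (p ^ e) => t + 1 ≤ vv p e x) := by
      rw [Finset.disjoint_left]
      intro x hx hx'
      simp only [mem_filter, mem_univ, true_and] at hx hx'
      omega
    have hcard := card_filter_le_vv hp ht
    rw [hsplit, Finset.card_union_of_disjoint hdisj, card_filter_le_vv hp hlt] at hcard
    obtain ⟨u, hu⟩ : ∃ u, e - t = u + 1 := ⟨e - t - 1, by omega⟩
    have h1 : e - (t + 1) = u := by omega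
    rw [h1, hu] at hcard
    rw [hu, Nat.totient_prime_pow hp (Nat.succ_pos u), Nat.succ_sub_one]
    have h2 : p ^ (u + 1) = p ^ u * p := pow_succ p u
    have h3 : p ^ u * (p - 1) + p ^ u = p ^ u * p := by
      rw [← Nat.mul_succ]
      congr 1
      have := hp.pos
      omega
    omega

lemma totient_pow_mono (hp : p.Prime) {s s' : ℕ} (h : s ≤ s') :
    Nat.totient (p ^ s) ≤ Nat.totient (p ^ s') :=
  Nat.le_of_dvd (Nat.totient_pos.2 (pow_pos hp.pos _))
    (Nat.totient_dvd_of_dvd (pow_dvd_pow p h))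

end Coord

section Ring
variable {k : ℕ} (p r : Fin k → ℕ)

/-- the product ring -/
abbrev Rng (p r : Fin k → ℕ) := ∀ i, ZMod (p i ^ r i)

/-- valuation vector -/
def vec (x : Rng p r) : Fin k → ℕ := fun i => vv (p i) (r i) (x i)

/-- complementary vector -/
def conj (a : Fin k → ℕ) : Fin k → ℕ := fun i => r i - a i

/-- class size -/
def mm (a : Fin k → ℕ) : ℕ := ∏ i, Nat.totient (p i ^ (r i - a i))

/-- comparison key -/
def key (a : Fin k → ℕ) : ℤ ×ₗ (ℕ ×ₗ Lex (Fin k → ℕ)) :=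
  toLex (-(mm p r a : ℤ), toLex (∑ i, a i, toLex a))

/-- canonical class representative -/
def EE (a : Fin k → ℕ) : Rng p r := fun i => ((p i ^ a i : ℕ) : ZMod (p i ^ r i))

variable {p r} (hp : ∀ i, (p i).Prime)
include hp

lemma vec_le (x : Rng p r) (i : Fin k) : vec p r x i ≤ r i := vv_le (hp i) (x i)

lemma mul_vec_zero_iff (x y : Rng p r) :
    x * y = 0 ↔ ∀ i, r i ≤ vec p r x i + vec p r y i := by
  rw [funext_iff]
  exact forall_congr' fun i => by
    simpa [vec] using mul_eq_zero_iff (hp i) (x i) (y i)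

lemma eq_zero_iff_vec (x : Rng p r) : x = 0 ↔ ∀ i, vec p r x i = r i := by
  rw [funext_iff]
  exact forall_congr' fun i => by
    simpa [vec] using (vv_eq_e_iff (hp i) (x i)).symm

lemma vec_EE {a : Fin k → ℕ} (ha : ∀ i, a i ≤ r i) : vec p r (EE p r a) = a :=
  funext fun i => vv_pow_cast (hp i) (ha i)

omit hp in
lemma conj_conj {a : Fin k → ℕ} (ha : ∀ i, a i ≤ r i) : conj r (conj r a) = a := by
  funext i
  have := ha i
  simp only [conj]
  omega

omit hp in
lemma conj_le (a : Fin k → ℕ) (i : Fin k) : conj r a i ≤ r i := Nat.sub_le _ _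

/-- membership in zdStar via valuations -/
lemma mem_zdStar_iff (x : Rng p r) :
    x ∈ zdStar (Rng p r) ↔ ((∃ i, 0 < vec p r x i) ∧ ∃ i, vec p r x i < r i) := by
  constructor
  · rintro ⟨hx0, y, hy0, hxy⟩
    constructor
    · obtain ⟨j, hj⟩ : ∃ j, vec p r y j ≠ r j := by
        by_contra h
        push_neg at h
        exact hy0 ((eq_zero_iff_vec hp y).2 h)
      have hj' : vec p r y j < r j := lt_of_le_of_ne (vec_le hp y j) hj
      have := ((mul_vec_zero_iff hp x y).1 hxy) j
      exact ⟨j, by omega⟩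
    · obtain ⟨j, hj⟩ : ∃ j, vec p r x j ≠ r j := by
        by_contra h
        push_neg at h
        exact hx0 ((eq_zero_iff_vec hp x).2 h)
      exact ⟨j, lt_of_le_of_ne (vec_le hp x j) hj⟩
  · rintro ⟨⟨i, hi⟩, ⟨j, hj⟩⟩
    refine ⟨fun h => ?_, ?_⟩
    · rw [eq_zero_iff_vec hp] at h
      exact absurd (h j) hj.ne
    · set y : Rng p r := Function.update (0 : Rng p r)
        i (((p i ^ (r i - vec p r x i) : ℕ) : ZMod (p i ^ r i))) with hy
      have hvyi : vec p r y i = r i - vec p r x i := by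
        simp only [vec, hy, Function.update_self]
        exact vv_pow_cast (hp i) (by omega)
      have hvyj : ∀ j, j ≠ i → vec p r y j = r j := by
        intro j hj
        simp only [vec, hy, Function.update_of_ne hj]
        exact vv_zero
      refine ⟨y, ?_, ?_⟩
      · intro h
        rw [eq_zero_iff_vec hp] at h
        have := h i
        rw [hvyi] at this
        have := vec_le hp x i
        omega
      · rw [mul_vec_zero_iff hp]
        intro j
        by_cases hji : j = i
        · subst hji
          have := vec_le hp x j
          omega
        · rw [hvyj j hji]
          omega

lemma mm_mono {a b : Fin k → ℕ} (hab : ∀ i, a i ≤ b i) : mm p r b ≤ mm p r a :=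
  Finset.prod_le_prod' fun i _ =>
    totient_pow_mono (hp i) (Nat.sub_le_sub_left (hab i) (r i))

omit hp in
lemma key_injective {a b : Fin k → ℕ} (h : key p r a = key p r b) : a = b := by
  have := congrArg (fun z => (ofLex (ofLex z).2).2) h
  simpa [key] using this

lemma key_lt {a b : Fin k → ℕ} (hab : ∀ i, a i ≤ b i) (hne : a ≠ b) :
    key p r a < key p r b := by
  rw [key, key, Prod.Lex.lt_iff]
  have hmm : mm p r b ≤ mm p r a := mm_mono hp hab
  rcases lt_or_eq_of_le hmm with hlt | heq
  · left
    simp only [ofLex_toLex]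
    omega
  · right
    constructor
    · simp only [ofLex_toLex, heq]
    · rw [Prod.Lex.lt_iff]
      left
      simp only [ofLex_toLex]
      obtain ⟨i, hi⟩ := Function.ne_iff.1 hne
      exact Finset.sum_lt_sum (fun i _ => hab i)
        ⟨i, Finset.mem_univ i, lt_of_le_of_ne (hab i) hi⟩

omit hp in
lemma key_lt_mm_le {a b : Fin k → ℕ} (h : key p r a < key p r b) :
    mm p r b ≤ mm p r a := by
  rw [key, key, Prod.Lex.lt_iff] at h
  rcases h with h | ⟨h, _⟩ <;> simp only [ofLex_toLex] at h <;> omega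


omit hp in
lemma key_lt_iff {a b : Fin k → ℕ} :
    key p r a < key p r b ↔ mm p r b < mm p r a ∨
      (mm p r a = mm p r b ∧ ((∑ i, a i) < (∑ i, b i) ∨
        ((∑ i, a i) = (∑ i, b i) ∧ toLex a < toLex b))) := by
  rw [key, key, Prod.Lex.lt_iff]
  constructor
  · rintro (h | ⟨h1, h2⟩)
    · left; simp only [ofLex_toLex] at h; omega
    · right
      simp only [ofLex_toLex] at h1 h2
      refine ⟨by omega, ?_⟩
      rw [Prod.Lex.lt_iff] at h2
      rcases h2 with h2 | ⟨h2a, h2b⟩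
      · left; exact h2
      · right; exact ⟨h2a, h2b⟩
  · rintro (h | ⟨h1, h2⟩)
    · left; simp only [ofLex_toLex]; omega
    · right
      refine ⟨by simp only [ofLex_toLex]; omega, ?_⟩
      rw [Prod.Lex.lt_iff]
      rcases h2 with h2 | ⟨h2a, h2b⟩
      · left; exact h2
      · right; exact ⟨h2a, h2b⟩

omit hp in
lemma key_trans {a b c : Fin k → ℕ} (h1 : key p r a < key p r b)
    (h2 : key p r b < key p r c) : key p r a < key p r c := by
  rw [key_lt_iff] at h1 h2 ⊢
  have htr : toLex a < toLex b → toLex b < toLex c → toLex a < toLex c :=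
    fun u v => trans_of (· < ·) u v
  rcases h1 with h1 | ⟨h1a, h1b⟩ <;> rcases h2 with h2 | ⟨h2a, h2b⟩
  · left; omega
  · left; omega
  · left; omega
  · right
    refine ⟨by omega, ?_⟩
    rcases h1b with h1b | ⟨h1c, h1d⟩ <;> rcases h2b with h2b | ⟨h2c, h2d⟩
    · left; omega
    · left; omega
    · left; omega
    · right; exact ⟨by omega, htr h1d h2d⟩

omit hp in
lemma key_irrefl {a : Fin k → ℕ} : ¬ key p r a < key p r a := by
  rw [key_lt_iff]
  rintro (h | ⟨h1, h2 | ⟨h3, h4⟩⟩)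
  · omega
  · omega
  · exact irrefl_of (· < ·) (toLex a) h4

omit hp in
lemma key_total {a b : Fin k → ℕ} (h : a ≠ b) :
    key p r a < key p r b ∨ key p r b < key p r a := by
  have htri : toLex a < toLex b ∨ a = b ∨ toLex b < toLex a := by
    have := (Pi.isTrichotomous_lex (· < · : Fin k → Fin k → Prop)
      (fun {_} => (· < · : ℕ → ℕ → Prop)) (IsWellFounded.wf)).trichotomous a b
    by_cases h1 : toLex a < toLex b
    · exact Or.inl h1
    by_cases h2 : toLex b < toLex a
    · exact Or.inr (Or.inr h2)
    exact Or.inr (Or.inl (this h1 h2))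
  rcases Nat.lt_trichotomy (mm p r a) (mm p r b) with hm | hm | hm
  · right; rw [key_lt_iff]; left; exact hm
  · rcases Nat.lt_trichotomy (∑ i, a i) (∑ i, b i) with hs | hs | hs
    · left; rw [key_lt_iff]; right; exact ⟨hm, Or.inl hs⟩
    · rcases htri with ht | ht | ht
      · left; rw [key_lt_iff]; right; exact ⟨hm, Or.inr ⟨hs, ht⟩⟩
      · exact absurd ht h
      · right; rw [key_lt_iff]; right; exact ⟨hm.symm, Or.inr ⟨hs.symm, ht⟩⟩
    · right; rw [key_lt_iff]; right; exact ⟨hm.symm, Or.inl hs⟩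
  · left; rw [key_lt_iff]; left; exact hm


lemma card_class_vec [Fintype (Rng p r)] [DecidableEq (Rng p r)]
    {a : Fin k → ℕ} (ha : ∀ i, a i ≤ r i) :
    Fintype.card {z : Rng p r // vec p r z = a} = mm p r a := by
  classical
  haveI : ∀ i, NeZero (p i ^ r i) := fun i => neZero_pow (hp i)
  have e1 : {z : Rng p r // vec p r z = a}
      ≃ ∀ i, {w : ZMod (p i ^ r i) // vv (p i) (r i) w = a i} :=
    (Equiv.subtypeEquivRight (fun z => funext_iff)).trans
      (Equiv.subtypePiEquivPi (p := fun i w => vv (p i) (r i) w = a i))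
  rw [Fintype.card_congr e1, Fintype.card_pi]
  unfold mm
  apply Finset.prod_congr rfl
  intro i _
  rw [Fintype.card_subtype]
  convert card_class (hp i) (ha i) using 2

end Ring

section Graph
attribute [local instance] Classical.propDecidable

variable {k : ℕ} {p r : Fin k → ℕ}

def chosen (p r : Fin k → ℕ) (a : Fin k → ℕ) : Prop := key p r a < key p r (conj r a)
def center (r : Fin k → ℕ) (a : Fin k → ℕ) : Prop := a = conj r a
def inA (r : Fin k → ℕ) (a : Fin k → ℕ) : Prop := (∃ i, 0 < a i) ∧ (∃ i, a i < r i)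

variable (hp : ∀ i, (p i).Prime)

lemma not_center_of_chosen {a : Fin k → ℕ} (h : chosen p r a) : ¬ center r a := by
  intro hc
  rw [chosen, ← hc] at h
  exact key_irrefl h

lemma tri {a : Fin k → ℕ} (ha : ∀ i, a i ≤ r i) (hnc : ¬ chosen p r a)
    (hcen : ¬ center r a) : chosen p r (conj r a) := by
  rcases key_total (a := a) (b := conj r a) (p := p) hcen with h | h
  · exact absurd h hnc
  · rw [chosen, conj_conj ha]
    exact h

lemma inA_conj {a : Fin k → ℕ} (ha : ∀ i, a i ≤ r i) (h : inA r a) : inA r (conj r a) := by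
  obtain ⟨⟨i, hi⟩, ⟨j, hj⟩⟩ := h
  constructor
  · exact ⟨j, by simp only [conj]; omega⟩
  · refine ⟨i, ?_⟩
    have := ha i
    simp only [conj]
    omega

include hp

lemma chosen_loop {a : Fin k → ℕ} (ha : ∀ i, a i ≤ r i) (h : chosen p r a) :
    ∃ i, a i + a i < r i := by
  by_contra hcon
  push_neg at hcon
  have hle : ∀ i, conj r a i ≤ a i := fun i => by
    have := hcon i
    simp only [conj]
    omega
  by_cases heq : conj r a = a
  · rw [chosen, heq] at h
    exact key_irrefl h
  · have h2 : key p r (conj r a) < key p r a := key_lt hp hle heq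
    rw [chosen] at h
    exact key_irrefl (key_trans h h2)

lemma compl_mul_zero {a : Fin k → ℕ} (ha : ∀ i, a i ≤ r i) {x y : Rng p r}
    (hx : vec p r x = a) (hy : vec p r y = conj r a) : x * y = 0 := by
  rw [mul_vec_zero_iff hp]
  intro i
  rw [hx, hy]
  have := ha i
  simp only [conj]
  omega

lemma center_mul_zero {a : Fin k → ℕ} (ha : ∀ i, a i ≤ r i) (hc : center r a)
    {x y : Rng p r} (hx : vec p r x = a) (hy : vec p r y = a) : x * y = 0 :=
  compl_mul_zero hp ha hx (hy.trans hc)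

/-- two elements of distinct chosen classes have nonzero product -/
lemma chosen_chosen_ne {a b : Fin k → ℕ} (hlea : ∀ i, a i ≤ r i) (hleb : ∀ i, b i ≤ r i)
    (ha : chosen p r a) (hb : chosen p r b) (hsum : ∀ i, r i ≤ a i + b i) : False := by
  have hba : ∀ i, conj r a i ≤ b i := fun i => by
    have := hsum i; have := hlea i; simp only [conj]; omega
  have hab : ∀ i, conj r b i ≤ a i := fun i => by
    have := hsum i; have := hleb i; simp only [conj]; omega
  by_cases hε : conj r a = b
  · rw [chosen] at ha hb
    rw [← hε, conj_conj hlea] at hb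
    exact key_irrefl (key_trans (hε ▸ ha) hb)
  · have h2 : key p r (conj r a) < key p r b := key_lt hp hba hε
    have hcb : conj r b ≠ a := by
      intro h
      apply hε
      rw [← h, conj_conj hleb]
    have h3 : key p r (conj r b) < key p r a := key_lt hp hab hcb
    rw [chosen] at ha hb
    exact key_irrefl (key_trans (key_trans (key_trans ha h2) hb) h3)

/-- a chosen-class element and a center element have nonzero product -/
lemma chosen_center_ne {a b : Fin k → ℕ} (hlea : ∀ i, a i ≤ r i) (hleb : ∀ i, b i ≤ r i)
    (ha : chosen p r a) (hb : center r b) (hsum : ∀ i, r i ≤ a i + b i) : False := by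
  have hba : ∀ i, conj r a i ≤ b i := fun i => by
    have := hsum i; have := hlea i; simp only [conj]; omega
  have hb' : ∀ i, b i ≤ a i := fun i => by
    have h1 : r i ≤ b i + a i := by have := hsum i; omega
    have : b i = r i - b i := congrFun hb i
    have := hleb i
    omega
  by_cases heq : b = a
  · exact not_center_of_chosen ha (heq ▸ hb)
  · have hkba : key p r b < key p r a := key_lt hp hb' heq
    rw [chosen] at ha
    by_cases hε : conj r a = b
    · exact key_irrefl (key_trans (hε ▸ ha) hkba)
    · have h2 : key p r (conj r a) < key p r b := key_lt hp hba hε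
      exact key_irrefl (key_trans (key_trans ha h2) hkba)

end Graph
end ZD

namespace ZD
section Main
attribute [local instance] Classical.propDecidable

variable {k : ℕ} {p r : Fin k → ℕ} (hp : ∀ i, (p i).Prime) [∀ i, NeZero (p i ^ r i)]

lemma adj_iff (x y : ↥(zdStar (Rng p r))) :
    ((gammaGraph (Rng p r))ᶜ).Adj x y ↔ x ≠ y ∧ (x : Rng p r) * y ≠ 0 := by
  rw [SimpleGraph.compl_adj]
  unfold gammaGraph gammaZero
  rw [SimpleGraph.comap_adj]
  constructor
  · rintro ⟨hne, hn⟩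
    exact ⟨hne, fun h0 => hn ⟨fun h => hne (Subtype.ext h), h0⟩⟩
  · rintro ⟨hne, h0⟩
    exact ⟨hne, fun hz => h0 hz.2⟩

/-- the clique/color set -/
def KS (p r : Fin k → ℕ) : Set (↥(zdStar (Rng p r))) :=
  {x | chosen p r (vec p r ↑x) ∨
    (center r (vec p r ↑x) ∧ (x : Rng p r) = EE p r (vec p r ↑x))}

include hp

lemma KS_clique_aux {x y : ↥(zdStar (Rng p r))} (hx : x ∈ KS p r) (hy : y ∈ KS p r)
    (hne : x ≠ y) : (x : Rng p r) * y ≠ 0 := by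
  intro h0
  have hsum := (mul_vec_zero_iff hp _ _).1 h0
  rcases hx with hxc | ⟨hxc, hxe⟩ <;> rcases hy with hyc | ⟨hyc, hye⟩
  · exact chosen_chosen_ne hp (vec_le hp _) (vec_le hp _) hxc hyc hsum
  · exact chosen_center_ne hp (vec_le hp _) (vec_le hp _) hxc hyc hsum
  · exact chosen_center_ne hp (vec_le hp _) (vec_le hp _) hyc hxc
      (fun i => by have := hsum i; omega)
  · have hab : ∀ i, vec p r (x : Rng p r) i ≤ vec p r (y : Rng p r) i := by
      intro i
      have h1 := congrFun hxc i
      have h2 := vec_le hp (x : Rng p r) i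
      have h3 := hsum i
      simp only [conj] at h1
      omega
    have hba : ∀ i, vec p r (y : Rng p r) i ≤ vec p r (x : Rng p r) i := by
      intro i
      have h1 := congrFun hyc i
      have h2 := vec_le hp (y : Rng p r) i
      have h3 := hsum i
      simp only [conj] at h1
      omega
    have hv : vec p r (x : Rng p r) = vec p r (y : Rng p r) :=
      funext fun i => le_antisymm (hab i) (hba i)
    exact hne (Subtype.ext (by rw [hxe, hye, hv]))

/-- the canonical vertex of a class -/
noncomputable def Evert (a : Fin k → ℕ) (hle : ∀ i, a i ≤ r i) (hA : inA r a) :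
    ↥(zdStar (Rng p r)) :=
  ⟨EE p r a, (mem_zdStar_iff hp _).2 (by rw [vec_EE hp hle]; exact hA)⟩

lemma vec_Evert (a : Fin k → ℕ) (hle : ∀ i, a i ≤ r i) (hA : inA r a) :
    vec p r ((Evert hp a hle hA : ↥(zdStar (Rng p r))) : Rng p r) = a :=
  vec_EE hp hle

/-- vertices of a given class, as a subtype -/
lemma card_class_vertex [Fintype (Rng p r)] (a : Fin k → ℕ) (hle : ∀ i, a i ≤ r i)
    (hA : inA r a) :
    Fintype.card {x : ↥(zdStar (Rng p r)) // vec p r ↑x = a} = mm p r a := by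
  rw [← card_class_vec hp hle]
  apply Fintype.card_congr
  exact {
    toFun := fun x => ⟨(x.1 : Rng p r), x.2⟩
    invFun := fun z => ⟨⟨z.1, (mem_zdStar_iff hp z.1).2 (by rw [z.2]; exact hA)⟩, z.2⟩
    left_inv := fun x => rfl
    right_inv := fun z => rfl }

/-- injection from an unchosen class into its chosen partner class -/
noncomputable def embFun [Fintype (Rng p r)] (a : Fin k → ℕ) (hle : ∀ i, a i ≤ r i)
    (hA : inA r a) (h1 : ¬ chosen p r a) (h2 : ¬ center r a) :
    {x : ↥(zdStar (Rng p r)) // vec p r ↑x = a} ↪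
      {x : ↥(zdStar (Rng p r)) // vec p r ↑x = conj r a} := by
  apply Nonempty.some
  apply Function.Embedding.nonempty_of_card_le
  rw [card_class_vertex hp a hle hA,
    card_class_vertex hp (conj r a) (fun i => Nat.sub_le _ _) (inA_conj hle hA)]
  have hch : chosen p r (conj r a) := tri hle h1 h2
  rw [chosen, conj_conj hle] at hch
  exact key_lt_mm_le hch

/-- the color of a vertex -/
noncomputable def g [Fintype (Rng p r)] (a : Fin k → ℕ) (hle : ∀ i, a i ≤ r i)
    (hA : inA r a) (x : ↥(zdStar (Rng p r))) (hx : vec p r ↑x = a) :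
    ↥(zdStar (Rng p r)) :=
  if h1 : chosen p r a then x
  else if h2 : center r a then Evert hp a hle hA
  else ↑(embFun hp a hle hA h1 h2 ⟨x, hx⟩)

lemma g_mem [Fintype (Rng p r)] (a : Fin k → ℕ) (hle : ∀ i, a i ≤ r i)
    (hA : inA r a) (x : ↥(zdStar (Rng p r))) (hx : vec p r ↑x = a) :
    g hp a hle hA x hx ∈ KS p r := by
  unfold g
  split_ifs with h1 h2
  · exact Or.inl (by rw [hx]; exact h1)
  · exact Or.inr ⟨by rw [vec_Evert hp a hle hA]; exact h2,
      by rw [vec_Evert hp a hle hA]; rfl⟩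
  · refine Or.inl ?_
    have hv := (embFun hp a hle hA h1 h2 ⟨x, hx⟩).2
    rw [hv]
    exact tri hle h1 h2

lemma g_vec [Fintype (Rng p r)] (a : Fin k → ℕ) (hle : ∀ i, a i ≤ r i)
    (hA : inA r a) (x : ↥(zdStar (Rng p r))) (hx : vec p r ↑x = a) :
    vec p r ↑(g hp a hle hA x hx) = a ∨ vec p r ↑(g hp a hle hA x hx) = conj r a := by
  unfold g
  split_ifs with h1 h2
  · exact Or.inl hx
  · exact Or.inl (vec_Evert hp a hle hA)
  · exact Or.inr (embFun hp a hle hA h1 h2 ⟨x, hx⟩).2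

lemma g_ne [Fintype (Rng p r)] (a b : Fin k → ℕ) (hlea : ∀ i, a i ≤ r i)
    (hleb : ∀ i, b i ≤ r i) (hAa : inA r a) (hAb : inA r b)
    (x y : ↥(zdStar (Rng p r))) (hx : vec p r ↑x = a) (hy : vec p r ↑y = b)
    (hne : x ≠ y) (h0 : (x : Rng p r) * y ≠ 0) :
    g hp a hlea hAa x hx ≠ g hp b hleb hAb y hy := by
  by_cases hab : a = b
  · subst hab
    unfold g
    split_ifs with h1 h2
    · exact hne
    · exact absurd (center_mul_zero hp hlea h2 hx hy) h0
    · intro heq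
      have heq2 : embFun hp a hlea hAa h1 h2 ⟨x, hx⟩ = embFun hp a hlea hAa h1 h2 ⟨y, hy⟩ :=
        Subtype.ext heq
      have := (embFun hp a hlea hAa h1 h2).injective heq2
      exact hne (congrArg Subtype.val this)
  · intro heq
    have hveq : vec p r ↑(g hp a hlea hAa x hx) = vec p r ↑(g hp b hleb hAb y hy) := by
      rw [heq]
    rcases g_vec hp a hlea hAa x hx with hva | hva <;>
      rcases g_vec hp b hleb hAb y hy with hvb | hvb <;>
        rw [hva, hvb] at hveq
    · exact hab hveq
    · apply h0
      rw [mul_comm]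
      exact compl_mul_zero hp hleb hy (hx.trans hveq)
    · exact h0 (compl_mul_zero hp hlea hx (hy.trans hveq.symm))
    · exact hab (by rw [← conj_conj hlea, hveq, conj_conj hleb])
lemma inA_vec (x : ↥(zdStar (Rng p r))) : inA r (vec p r (x : Rng p r)) :=
  (mem_zdStar_iff hp (x : Rng p r)).1 x.2

lemma exists_clique_coloring [Fintype (Rng p r)] :
    ∃ K : Finset ↥(zdStar (Rng p r)),
      ((gammaGraph (Rng p r))ᶜ).IsClique (K : Set ↥(zdStar (Rng p r))) ∧
      ((gammaGraph (Rng p r))ᶜ).Colorable K.card := by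
  classical
  refine ⟨(KS p r).toFinset, ?_, ?_⟩
  · intro x hx y hy hne
    rw [Finset.mem_coe, Set.mem_toFinset] at hx hy
    rw [adj_iff]
    exact ⟨hne, KS_clique_aux hp hx hy hne⟩
  · rw [Set.toFinset_card]
    apply SimpleGraph.Coloring.colorable
    refine SimpleGraph.Coloring.mk
      (fun x => ⟨g hp (vec p r (x : Rng p r)) (vec_le (r := r) hp (x : Rng p r))
        (inA_vec hp x) x rfl, g_mem hp _ _ _ x rfl⟩) ?_
    intro x y hadj
    rw [adj_iff] at hadj
    intro hcc
    have hval := congrArg Subtype.val hcc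
    exact g_ne hp _ _ _ _ _ _ x y rfl rfl hadj.1 hadj.2 hval

end Main
end ZD

theorem stmt17 (k : ℕ) (hk : 1 ≤ k) (p r : Fin k → ℕ)
    (hp : ∀ i, (p i).Prime) (hr : ∀ i, 0 < r i) :
    ((gammaGraph (∀ i, ZMod (p i ^ r i)))ᶜ).chromaticNumber =
      cliqueNumE ((gammaGraph (∀ i, ZMod (p i ^ r i)))ᶜ) := by
  classical
  haveI : ∀ i, NeZero (p i ^ r i) := fun i => ZD.neZero_pow (hp i)
  obtain ⟨K, hK, hcol⟩ := ZD.exists_clique_coloring (p := p) (r := r) hp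
  apply le_antisymm
  · refine le_trans hcol.chromaticNumber_le ?_
    unfold cliqueNumE
    exact le_iSup₂ (f := fun (s : Finset _)
      (_ : ((gammaGraph (∀ i, ZMod (p i ^ r i)))ᶜ).IsClique ↑s) => (s.card : ℕ∞)) K hK
  · unfold cliqueNumE
    exact iSup₂_le fun s hs => hs.card_le_chromaticNumber
end

section
/- Let R = F₁ × ⋯ × F_k be a finite product of finite fields with k ≥ 1. Then χ(complement of Γ(R)) = ω(complement of Γ(R)). -/
section St18
open scoped Classical
variable {k : ℕ} (F : Fin k → Type*) [∀ i, Field (F i)] [∀ i, Fintype (F i)]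

open Finset

/-- support of a vector -/
noncomputable def supp18 (x : ∀ i, F i) : Finset (Fin k) :=
  Finset.univ.filter (fun i => x i ≠ 0)

lemma mem_supp18 {x : ∀ i, F i} {i : Fin k} : i ∈ supp18 F x ↔ x i ≠ 0 := by
  simp [supp18]

lemma supp18_eq_empty {x : ∀ i, F i} : supp18 F x = ∅ ↔ x = 0 := by
  simp only [Finset.eq_empty_iff_forall_notMem, mem_supp18, not_not]
  constructor
  · intro h; funext i; exact h i
  · intro h i; rw [h]; rfl

lemma mem_zdStar_iff18 {x : ∀ i, F i} :
    x ∈ zdStar (∀ i, F i) ↔ supp18 F x ≠ ∅ ∧ supp18 F x ≠ Finset.univ := by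
  constructor
  · rintro ⟨hx, y, hy, hxy⟩
    refine ⟨by simpa [supp18_eq_empty] using hx, ?_⟩
    intro hu
    have : ∃ i, y i ≠ 0 := by
      by_contra h
      push_neg at h
      exact hy (funext h)
    obtain ⟨i, hyi⟩ := this
    have hxi : x i ≠ 0 := mem_supp18 F |>.1 (hu ▸ Finset.mem_univ i)
    have hz : (x * y) i = 0 := by rw [hxy]; rfl
    rw [Pi.mul_apply] at hz
    exact (mul_ne_zero hxi hyi) hz
  · rintro ⟨h1, h2⟩
    refine ⟨by simpa [← supp18_eq_empty F] using h1, ?_⟩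
    have : ∃ i, i ∉ supp18 F x := by
      by_contra h
      push_neg at h
      exact h2 (Finset.eq_univ_of_forall h)
    obtain ⟨i, hi⟩ := this
    have hxi : x i = 0 := by simpa [mem_supp18] using hi
    refine ⟨Pi.single i 1, ?_, ?_⟩
    · intro h
      have := congrFun h i
      rw [Pi.single_eq_same] at this
      exact one_ne_zero this
    · funext j
      by_cases hj : j = i
      · subst hj; simp [Pi.mul_apply, hxi]
      · simp [Pi.mul_apply, Pi.single_eq_of_ne hj]

lemma mul_ne_zero_iff18 {x y : ∀ i, F i} :
    x * y ≠ 0 ↔ ∃ i, x i ≠ 0 ∧ y i ≠ 0 := by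
  constructor
  · intro h
    by_contra hc
    push_neg at hc
    refine h (funext fun i => ?_)
    rw [Pi.mul_apply]
    by_cases hx : x i = 0
    · rw [hx, zero_mul]; rfl
    · rw [hc i hx, mul_zero]; rfl
  · rintro ⟨i, hx, hy⟩ h
    have := congrFun h i
    rw [Pi.mul_apply] at this
    exact mul_ne_zero hx hy this

/-- set of vectors with exact support `S` -/
noncomputable def P18 (S : Finset (Fin k)) : Finset (∀ i, F i) :=
  Finset.univ.filter (fun x => supp18 F x = S)

lemma mem_P18 {S : Finset (Fin k)} {x : ∀ i, F i} : x ∈ P18 F S ↔ supp18 F x = S := by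
  simp [P18]

lemma P18_mono {S T : Finset (Fin k)} (hST : S ⊆ T) :
    (P18 F S).card ≤ (P18 F T).card := by
  classical
  apply Finset.card_le_card_of_injOn
    (fun x i => if i ∈ S then x i else if i ∈ T then (1 : F i) else 0)
  · intro x hx
    rw [Finset.mem_coe, mem_P18] at hx ⊢
    ext i
    rw [mem_supp18]
    by_cases hiS : i ∈ S
    · have : x i ≠ 0 := (mem_supp18 F).1 (hx ▸ hiS)
      simp [if_pos hiS, this, hST hiS]
    · by_cases hiT : i ∈ T <;> simp [if_neg hiS, hiT]
  · intro x hx y hy hxy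
    simp only [Finset.mem_coe, mem_P18] at hx hy
    funext i
    by_cases hiS : i ∈ S
    · have := congrFun hxy i
      simpa [if_pos hiS] using this
    · have hx0 : x i = 0 := by
        by_contra h; exact hiS (hx ▸ (mem_supp18 F).2 h)
      have hy0 : y i = 0 := by
        by_contra h; exact hiS (hy ▸ (mem_supp18 F).2 h)
      rw [hx0, hy0]

/-- the chosen member of each complementary pair of supports -/
def chosen18 (i0 : Fin k) (S : Finset (Fin k)) : Prop :=
  (P18 F Sᶜ).card < (P18 F S).card ∨
    ((P18 F S).card = (P18 F Sᶜ).card ∧ i0 ∈ S)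

lemma chosen18_compl {i0 : Fin k} {S : Finset (Fin k)} (h : ¬ chosen18 F i0 S) :
    chosen18 F i0 Sᶜ ∧ (P18 F S).card ≤ (P18 F Sᶜ).card := by
  rw [chosen18, not_or, not_lt, not_and] at h
  obtain ⟨h1, h2⟩ := h
  rcases lt_or_eq_of_le h1 with h3 | h3
  · exact ⟨Or.inl (by rwa [compl_compl]), le_of_lt h3⟩
  · refine ⟨Or.inr ⟨by rw [compl_compl, h3], ?_⟩, le_of_eq h3⟩
    rw [Finset.mem_compl]
    exact h2 h3

lemma chosen18_le {i0 : Fin k} {S : Finset (Fin k)} (h : chosen18 F i0 S) :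
    (P18 F Sᶜ).card ≤ (P18 F S).card := by
  rcases h with h | ⟨h, _⟩
  · exact le_of_lt h
  · exact le_of_eq h.symm

lemma chosen18_inter {i0 : Fin k} {S T : Finset (Fin k)}
    (hS : chosen18 F i0 S) (hT : chosen18 F i0 T) : ¬ Disjoint S T := by
  intro hd
  have hTS : T ⊆ Sᶜ := le_compl_iff_disjoint_left.mpr hd
  have hST : S ⊆ Tᶜ := le_compl_iff_disjoint_right.mpr hd
  have c1 : (P18 F S).card ≤ (P18 F Tᶜ).card := P18_mono F hST
  have c2 : (P18 F T).card ≤ (P18 F Sᶜ).card := P18_mono F hTS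
  have c3 := chosen18_le F hS
  have c4 := chosen18_le F hT
  -- all equal
  have e1 : (P18 F S).card = (P18 F Sᶜ).card := le_antisymm (c1.trans (c4.trans c2)) c3
  have e2 : (P18 F T).card = (P18 F Tᶜ).card := le_antisymm (c2.trans (c3.trans c1)) c4
  have hiS : i0 ∈ S := by
    rcases hS with h | ⟨_, h⟩
    · omega
    · exact h
  have hiT : i0 ∈ T := by
    rcases hT with h | ⟨_, h⟩
    · omega
    · exact h
  exact Finset.disjoint_left.1 hd hiS hiT

lemma emb18 {S : Finset (Fin k)} (h : (P18 F S).card ≤ (P18 F Sᶜ).card) :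
    Nonempty (↥(P18 F S) ↪ ↥(P18 F Sᶜ)) :=
  Function.Embedding.nonempty_of_card_le (by simpa [Fintype.card_coe] using h)

/-- partial injection from vectors of support `S` to vectors of support `Sᶜ` -/
noncomputable def psi18 (S : Finset (Fin k)) (x : ∀ i, F i) : ∀ i, F i :=
  if h : (P18 F S).card ≤ (P18 F Sᶜ).card ∧ x ∈ P18 F S then
    ((Classical.choice (emb18 F h.1)) ⟨x, h.2⟩ : ↥(P18 F Sᶜ)).1
  else 0

lemma psi18_mem {S : Finset (Fin k)} {x : ∀ i, F i}
    (h1 : (P18 F S).card ≤ (P18 F Sᶜ).card) (h2 : x ∈ P18 F S) :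
    psi18 F S x ∈ P18 F Sᶜ := by
  rw [psi18, dif_pos ⟨h1, h2⟩]
  exact Subtype.mem _

lemma psi18_inj {S : Finset (Fin k)} {x y : ∀ i, F i}
    (h1 : (P18 F S).card ≤ (P18 F Sᶜ).card) (hx : x ∈ P18 F S) (hy : y ∈ P18 F S)
    (h : psi18 F S x = psi18 F S y) : x = y := by
  rw [psi18, dif_pos ⟨h1, hx⟩, psi18, dif_pos ⟨h1, hy⟩] at h
  have := (Classical.choice (emb18 F h1)).injective (Subtype.ext h)
  exact congrArg Subtype.val this

end St18

theorem stmt18 (k : ℕ) (hk : 1 ≤ k) (F : Fin k → Type*) [∀ i, Field (F i)]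
    [∀ i, Fintype (F i)] :
    ((gammaGraph (∀ i, F i))ᶜ).chromaticNumber =
      cliqueNumE ((gammaGraph (∀ i, F i))ᶜ) := by
  classical
  set R := ∀ i, F i with hR
  set G := (gammaGraph R)ᶜ with hG
  set i0 : Fin k := ⟨0, hk⟩ with hi0
  -- adjacency characterization
  have adj_iff : ∀ u v : ↥(zdStar R), G.Adj u v ↔ u ≠ v ∧ (u : R) * v ≠ 0 := by
    intro u v
    rw [hG, SimpleGraph.compl_adj]
    constructor
    · rintro ⟨hne, hna⟩
      refine ⟨hne, fun h0 => hna ?_⟩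
      exact (⟨fun h => hne (Subtype.ext h), h0⟩ : (u : R) ≠ v ∧ (u : R) * v = 0)
    · rintro ⟨hne, h0⟩
      exact ⟨hne, fun h => h0 (h : (u : R) ≠ v ∧ (u : R) * v = 0).2⟩
  -- supports of vertices are nonempty and proper
  have hsupp : ∀ v : ↥(zdStar R), supp18 F (v : R) ≠ ∅ ∧ supp18 F (v : R) ≠ Finset.univ :=
    fun v => (mem_zdStar_iff18 F).1 v.2
  -- the clique finset
  set D : Finset ↥(zdStar R) :=
    Finset.univ.filter (fun v => chosen18 F i0 (supp18 F (v : R))) with hD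
  -- D is a clique in G
  have hclq : G.IsClique (D : Set ↥(zdStar R)) := by
    intro u hu v hv huv
    simp only [hD, Finset.coe_filter, Set.mem_setOf_eq, Finset.mem_univ, true_and] at hu hv
    rw [adj_iff]
    refine ⟨huv, ?_⟩
    rw [mul_ne_zero_iff18]
    have := chosen18_inter F hu hv
    rw [Finset.not_disjoint_iff] at this
    obtain ⟨i, hiu, hiv⟩ := this
    exact ⟨i, (mem_supp18 F).1 hiu, (mem_supp18 F).1 hiv⟩
  -- the coloring
  have hcol : G.Colorable D.card := by
    -- color map into D
    have colmem : ∀ v : ↥(zdStar R), ¬ chosen18 F i0 (supp18 F (v : R)) →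
        psi18 F (supp18 F (v : R)) (v : R) ∈ P18 F (supp18 F (v : R))ᶜ := by
      intro v h
      exact psi18_mem F (chosen18_compl F h).2 ((mem_P18 F).2 rfl)
    have colzd : ∀ v : ↥(zdStar R), ¬ chosen18 F i0 (supp18 F (v : R)) →
        psi18 F (supp18 F (v : R)) (v : R) ∈ zdStar R := by
      intro v h
      rw [mem_zdStar_iff18]
      have hm := (mem_P18 F).1 (colmem v h)
      rw [hm]
      obtain ⟨h1, h2⟩ := hsupp v
      constructor
      · intro hc
        apply h2
        rw [← compl_compl (supp18 F (v : R)), hc, Finset.compl_empty]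
      · intro hc
        apply h1
        rw [← compl_compl (supp18 F (v : R)), hc, Finset.compl_univ]
    let colV : ↥(zdStar R) → ↥(zdStar R) := fun v =>
      if h : chosen18 F i0 (supp18 F (v : R)) then v
      else ⟨psi18 F (supp18 F (v : R)) (v : R), colzd v h⟩
    have colD : ∀ v, colV v ∈ D := by
      intro v
      rw [hD, Finset.mem_filter]
      refine ⟨Finset.mem_univ _, ?_⟩
      by_cases h : chosen18 F i0 (supp18 F (v : R))
      · simpa [colV, dif_pos h] using h
      · have : colV v = ⟨psi18 F (supp18 F (v : R)) (v : R), colzd v h⟩ := dif_neg h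
        rw [this]
        have hm := (mem_P18 F).1 (colmem v h)
        simp only [hm]
        exact (chosen18_compl F h).1
    -- supports of colors
    have colsupp : ∀ v : ↥(zdStar R), ¬ chosen18 F i0 (supp18 F (v : R)) →
        supp18 F ((colV v : ↥(zdStar R)) : R) = (supp18 F (v : R))ᶜ := by
      intro v h
      have : colV v = ⟨psi18 F (supp18 F (v : R)) (v : R), colzd v h⟩ := dif_neg h
      rw [this]
      exact (mem_P18 F).1 (colmem v h)
    -- properness
    have proper : ∀ {u v : ↥(zdStar R)}, G.Adj u v → colV u ≠ colV v := by
      intro u v hadj hc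
      rw [adj_iff] at hadj
      obtain ⟨hne, hmul⟩ := hadj
      rw [mul_ne_zero_iff18] at hmul
      obtain ⟨i, hiu, hiv⟩ := hmul
      by_cases hu : chosen18 F i0 (supp18 F (u : R)) <;>
        by_cases hv : chosen18 F i0 (supp18 F (v : R))
      · have e1 : colV u = u := dif_pos hu
        have e2 : colV v = v := dif_pos hv
        rw [e1, e2] at hc
        exact hne hc
      · -- u chosen, v not: supp u = (supp v)ᶜ, but they intersect at i
        have e1 : colV u = u := dif_pos hu
        have e2 : colV v = ⟨psi18 F (supp18 F (v : R)) (v : R), colzd v hv⟩ := dif_neg hv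
        have hval : (u : R) = psi18 F (supp18 F (v : R)) (v : R) :=
          congrArg Subtype.val (e1.symm.trans (hc.trans e2))
        have hsup : supp18 F (u : R) = (supp18 F (v : R))ᶜ := by
          rw [hval]; exact (mem_P18 F).1 (colmem v hv)
        have hicon : i ∈ (supp18 F (v : R))ᶜ := hsup ▸ (mem_supp18 F).2 hiu
        rw [Finset.mem_compl] at hicon
        exact hicon ((mem_supp18 F).2 hiv)
      · have e1 : colV v = v := dif_pos hv
        have e2 : colV u = ⟨psi18 F (supp18 F (u : R)) (u : R), colzd u hu⟩ := dif_neg hu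
        have hval : (v : R) = psi18 F (supp18 F (u : R)) (u : R) :=
          congrArg Subtype.val (e1.symm.trans (hc.symm.trans e2))
        have hsup : supp18 F (v : R) = (supp18 F (u : R))ᶜ := by
          rw [hval]; exact (mem_P18 F).1 (colmem u hu)
        have hicon : i ∈ (supp18 F (u : R))ᶜ := hsup ▸ (mem_supp18 F).2 hiv
        rw [Finset.mem_compl] at hicon
        exact hicon ((mem_supp18 F).2 hiu)
      · -- neither chosen
        have e1 := colsupp u hu
        have e2 := colsupp v hv
        have hcc : (supp18 F (u : R))ᶜ = (supp18 F (v : R))ᶜ := by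
          rw [← e1, ← e2, hc]
        have hss : supp18 F (u : R) = supp18 F (v : R) := compl_injective hcc
        have eu : colV u = ⟨psi18 F (supp18 F (u : R)) (u : R), colzd u hu⟩ := dif_neg hu
        have ev : colV v = ⟨psi18 F (supp18 F (v : R)) (v : R), colzd v hv⟩ := dif_neg hv
        rw [eu, ev] at hc
        have hvals : psi18 F (supp18 F (u : R)) (u : R)
            = psi18 F (supp18 F (v : R)) (v : R) := congrArg Subtype.val hc
        rw [← hss] at hvals
        have huv : (u : R) = (v : R) := by
          refine psi18_inj F (chosen18_compl F hu).2 ((mem_P18 F).2 rfl) ?_ hvals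
          rw [mem_P18, hss]
        exact hne (Subtype.ext huv)
    -- package the coloring
    have : G.Colorable (Fintype.card ↥D) := by
      exact (SimpleGraph.Coloring.mk (fun v => (⟨colV v, colD v⟩ : ↥D))
        (fun {u v} hadj h => proper hadj (congrArg Subtype.val h))).colorable
    simpa [Fintype.card_coe] using this
  -- assemble
  have h1 : G.chromaticNumber ≤ (D.card : ℕ∞) := hcol.chromaticNumber_le
  have h2 : (D.card : ℕ∞) ≤ cliqueNumE G := by
    refine le_trans ?_ (le_iSup _ D)
    exact le_trans (le_of_eq rfl) (le_iSup (fun _ : G.IsClique (D : Set _) => (D.card : ℕ∞)) hclq)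
  have h3 : cliqueNumE G ≤ G.chromaticNumber := by
    refine iSup_le fun s => iSup_le fun hs => ?_
    exact hs.card_le_chromaticNumber
  exact le_antisymm (h1.trans h2) h3
end
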